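/- arXiv:1404.2447 — 3 statements merged into one kernel-verified Lean document; each statement's English description precedes it below -/
import Mathlib

section
/- Let O be the ring of integers of a number field, 𝔭 a nonzero prime ideal with residue field of cardinality q, and f ≥ 1. Then the order of the symplectic group Sp_{2n}(O/𝔭^f) equals q^{(2n²+n)(f-1)} · |Sp_{2n}(F_q)|. -/
open scoped Classical
open Matrix

noncomputable def qPoch (q : ℝ) (j : ℕ) : ℝ := ∏ i ∈ Finset.range j, (1 - q⁻¹ ^ (i + 1))
noncomputable def qPochInf (q : ℝ) : ℝ := ∏' i : ℕ, (1 - q⁻¹ ^ (i + 1))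

/-- The standard symplectic form matrix `J = [[0,1],[-1,0]]`. -/
def Jmat (n : ℕ) (R : Type) [CommRing R] : Matrix (Fin n ⊕ Fin n) (Fin n ⊕ Fin n) R :=
  Matrix.fromBlocks 0 1 (-1) 0

/-- The symplectic group `Sp_{2n}(R) = {h ∈ GL_{2n}(R) : hᵀ J h = J}` as a subset of `GL`. -/
def SpSet (n : ℕ) (R : Type) [CommRing R] :
    Set (Matrix.GeneralLinearGroup (Fin n ⊕ Fin n) R) :=
  {h | (h : Matrix (Fin n ⊕ Fin n) (Fin n ⊕ Fin n) R)ᵀ * Jmat n R * h = Jmat n R}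

/-- The `m`-th symplectic group `Sp_{2n}^{(m)}(O/𝔭^f)`:
matrices `h ∈ GL_{2n}(O/𝔭^f)` with `hᵀ J h ≡ J (mod 𝔭^m)`. -/
noncomputable def SpmSet (n : ℕ) {O : Type} [CommRing O] (𝔭 : Ideal O) (f m : ℕ) (h : m ≤ f) :
    Set (Matrix.GeneralLinearGroup (Fin n ⊕ Fin n) (O ⧸ 𝔭 ^ f)) :=
  {A | (Ideal.Quotient.factor (S := 𝔭 ^ f) (T := 𝔭 ^ m) (Ideal.pow_le_pow_right h)).mapMatrix
        ((A : Matrix (Fin n ⊕ Fin n) (Fin n ⊕ Fin n) (O ⧸ 𝔭 ^ f))ᵀ * Jmat n (O ⧸ 𝔭 ^ f) *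
          (A : Matrix (Fin n ⊕ Fin n) (Fin n ⊕ Fin n) (O ⧸ 𝔭 ^ f)))
      = (Ideal.Quotient.factor (S := 𝔭 ^ f) (T := 𝔭 ^ m)
          (Ideal.pow_le_pow_right h)).mapMatrix (Jmat n (O ⧸ 𝔭 ^ f))}


set_option synthInstance.maxHeartbeats 1000000
set_option maxHeartbeats 1000000

variable {R R' : Type} [CommRing R] [CommRing R'] {n : ℕ}

lemma Jmat_transpose : (Jmat n R)ᵀ = -Jmat n R := by
  simp [Jmat, fromBlocks_transpose, fromBlocks_neg]

lemma Jmat_mul_Jmat : Jmat n R * Jmat n R = -1 := by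
  simp [Jmat, fromBlocks_multiply]
  rw [show (fromBlocks (-1) 0 0 (-1) : Matrix (Fin n ⊕ Fin n) (Fin n ⊕ Fin n) R) = -fromBlocks 1 0 0 1 by rw [fromBlocks_neg]; simp, ← fromBlocks_one]

lemma map_Jmat (φ : R →+* R') : (Jmat n R).map φ = Jmat n R' := by
  unfold Jmat
  ext i j
  rcases i with i | i <;> rcases j with j | j <;>
    simp [fromBlocks, Matrix.one_apply, apply_ite] <;>
      (split <;> simp_all)

lemma Jmat_alt (x : Fin n ⊕ Fin n → R) : x ⬝ᵥ (Jmat n R).mulVec x = 0 := by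
  have hx : x = Sum.elim (x ∘ Sum.inl) (x ∘ Sum.inr) := (Sum.elim_comp_inl_inr x).symm
  rw [hx, Jmat, fromBlocks_mulVec, sumElim_dotProduct_sumElim]
  simp [neg_mulVec, dotProduct_neg, dotProduct_comm]

lemma conj_diag_zero (B : Matrix (Fin n ⊕ Fin n) (Fin n ⊕ Fin n) R) (i : Fin n ⊕ Fin n) :
    (Bᵀ * Jmat n R * B) i i = 0 := by
  have : (Bᵀ * Jmat n R * B) i i = (fun j => B j i) ⬝ᵥ (Jmat n R).mulVec (fun j => B j i) := by
    rw [mul_assoc]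
    simp [Matrix.mul_apply, dotProduct, mulVec, Finset.mul_sum]
  rw [this, Jmat_alt]

lemma conj_skew (B : Matrix (Fin n ⊕ Fin n) (Fin n ⊕ Fin n) R) :
    (Bᵀ * Jmat n R * B)ᵀ = -(Bᵀ * Jmat n R * B) := by
  simp [transpose_mul, Jmat_transpose, mul_assoc]

def SpGroup (n : ℕ) (R : Type) [CommRing R] :
    Subgroup (Matrix.GeneralLinearGroup (Fin n ⊕ Fin n) R) where
  carrier := SpSet n R
  one_mem' := by simp [SpSet]
  mul_mem' := by
    intro A B hA hB
    simp only [SpSet, Set.mem_setOf_eq, Units.val_mul] at *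
    calc (↑A * ↑B)ᵀ * Jmat n R * (↑A * ↑B)
        = (↑B)ᵀ * ((↑A)ᵀ * Jmat n R * ↑A) * ↑B := by
          rw [transpose_mul]; noncomm_ring
      _ = Jmat n R := by rw [hA, hB]
  inv_mem' := by
    intro A hA
    simp only [SpSet, Set.mem_setOf_eq] at *
    have h1 : A.val * (A⁻¹).val = 1 := by
      rw [← Units.val_mul, mul_inv_cancel, Units.val_one]
    calc (A⁻¹).valᵀ * Jmat n R * (A⁻¹).val
        = (A⁻¹).valᵀ * (A.valᵀ * Jmat n R * A.val) * (A⁻¹).val := by rw [hA]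
      _ = (A.val * (A⁻¹).val)ᵀ * Jmat n R * (A.val * (A⁻¹).val) := by
          rw [transpose_mul]; noncomm_ring
      _ = Jmat n R := by rw [h1]; simp

/-- GL map induced by a ring hom. -/
def GLmap (φ : R →+* R') :
    Matrix.GeneralLinearGroup (Fin n ⊕ Fin n) R →* Matrix.GeneralLinearGroup (Fin n ⊕ Fin n) R' :=
  Units.map (φ.mapMatrix : Matrix _ _ R →+* Matrix _ _ R').toMonoidHom

lemma GLmap_coe (φ : R →+* R') (A : Matrix.GeneralLinearGroup (Fin n ⊕ Fin n) R) :
    (GLmap φ A : Matrix (Fin n ⊕ Fin n) (Fin n ⊕ Fin n) R') = (↑A : Matrix _ _ R).map φ := rfl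

lemma GLmap_mem_sp (φ : R →+* R') {A : Matrix.GeneralLinearGroup (Fin n ⊕ Fin n) R}
    (hA : A ∈ SpSet n R) : GLmap φ A ∈ SpSet n R' := by
  simp only [SpSet, Set.mem_setOf_eq] at *
  rw [GLmap_coe, ← Matrix.transpose_map, ← map_Jmat φ]
  calc (A.valᵀ).map φ * (Jmat n R).map φ * A.val.map φ
      = (A.valᵀ * Jmat n R * A.val).map φ := by
        rw [← Matrix.map_mul, ← Matrix.map_mul]
    _ = (Jmat n R).map φ := by rw [hA]

/-- The restriction of `GLmap` to the symplectic subgroups. -/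
def Sphom (φ : R →+* R') : SpGroup n R →* SpGroup n R' where
  toFun A := ⟨GLmap φ ↑A, GLmap_mem_sp φ A.2⟩
  map_one' := by ext : 2; simp [GLmap]
  map_mul' A B := by ext : 2; simp [GLmap]

lemma card_SpSet_eq (n : ℕ) (R : Type) [CommRing R] :
    Nat.card (SpSet n R) = Nat.card (SpGroup n R) := rfl

lemma mem_SpGroup_iff {A : Matrix.GeneralLinearGroup (Fin n ⊕ Fin n) R} :
    A ∈ SpGroup n R ↔ A.valᵀ * Jmat n R * A.val = Jmat n R := Iff.rfl

lemma Sphom_coe (φ : R →+* R') (A : SpGroup n R) :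
    ((Sphom φ A : Matrix.GeneralLinearGroup (Fin n ⊕ Fin n) R') :
      Matrix (Fin n ⊕ Fin n) (Fin n ⊕ Fin n) R') = φ.mapMatrix A.val.val := rfl

/-- Matrices all of whose entries are killed by `φ`. -/
def Killed (φ : R →+* R') (M : Matrix (Fin n ⊕ Fin n) (Fin n ⊕ Fin n) R) : Prop :=
  ∀ i j, φ (M i j) = 0

lemma Killed.mul_left (φ : R →+* R') {M : Matrix (Fin n ⊕ Fin n) (Fin n ⊕ Fin n) R}
    (hM : Killed φ M) (X : Matrix (Fin n ⊕ Fin n) (Fin n ⊕ Fin n) R) : Killed φ (X * M) := by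
  intro i j
  simp only [Matrix.mul_apply, map_sum, _root_.map_mul]
  exact Finset.sum_eq_zero fun k _ => by rw [hM k j, mul_zero]

lemma Killed.mul_right (φ : R →+* R') {M : Matrix (Fin n ⊕ Fin n) (Fin n ⊕ Fin n) R}
    (hM : Killed φ M) (X : Matrix (Fin n ⊕ Fin n) (Fin n ⊕ Fin n) R) : Killed φ (M * X) := by
  intro i j
  simp only [Matrix.mul_apply, map_sum, _root_.map_mul]
  exact Finset.sum_eq_zero fun k _ => by rw [hM i k, zero_mul]

lemma Killed.transpose (φ : R →+* R') {M : Matrix (Fin n ⊕ Fin n) (Fin n ⊕ Fin n) R}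
    (hM : Killed φ M) : Killed φ Mᵀ := fun i j => hM j i

lemma Killed.neg (φ : R →+* R') {M : Matrix (Fin n ⊕ Fin n) (Fin n ⊕ Fin n) R}
    (hM : Killed φ M) : Killed φ (-M) := fun i j => by
  simp only [Matrix.neg_apply, map_neg, hM i j, neg_zero]

lemma Killed.mul_eq_zero (φ : R →+* R') (hsq : ∀ x y : R, φ x = 0 → φ y = 0 → x * y = 0)
    {M N : Matrix (Fin n ⊕ Fin n) (Fin n ⊕ Fin n) R}
    (hM : Killed φ M) (hN : Killed φ N) : M * N = 0 := by
  ext i j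
  simp only [Matrix.mul_apply, Matrix.zero_apply]
  exact Finset.sum_eq_zero fun k _ => hsq _ _ (hM i k) (hN k j)

lemma killed_iff_mapMatrix (φ : R →+* R') (M : Matrix (Fin n ⊕ Fin n) (Fin n ⊕ Fin n) R) :
    Killed φ M ↔ φ.mapMatrix M = 0 := by
  constructor
  · intro h; ext i j; simpa using h i j
  · intro h i j
    have := congrFun (congrFun (congrArg (fun X => (X : Matrix _ _ R')) h) i) j
    simpa using this

/-- Index set of the (weak) upper triangle. -/
def UpperIdx (n : ℕ) : Type :=
  {p : (Fin n ⊕ Fin n) × (Fin n ⊕ Fin n) //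
    finSumFinEquiv p.1 ≤ finSumFinEquiv p.2}

noncomputable instance (n : ℕ) : Fintype (UpperIdx n) := by unfold UpperIdx; infer_instance

def upperIdxSigmaEquiv (d : ℕ) :
    {p : Fin d × Fin d // p.1 ≤ p.2} ≃ (Σ j : Fin d, Fin (j + 1)) where
  toFun p := ⟨p.val.2, ⟨p.val.1, Nat.lt_succ_of_le p.2⟩⟩
  invFun s := ⟨(⟨s.2.val, lt_of_lt_of_le s.2.isLt (Nat.succ_le_of_lt s.1.isLt)⟩, s.1),
    Nat.lt_succ_iff.mp s.2.isLt⟩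
  left_inv p := by ext <;> rfl
  right_inv s := rfl

lemma sum_range_aux (n : ℕ) : ∑ k ∈ Finset.range (n + n), (k + 1) = n * (2 * n + 1) := by
  induction n with
  | zero => simp
  | succ m ih =>
    have : m + 1 + (m + 1) = (m + m) + 1 + 1 := by omega
    rw [this, Finset.sum_range_succ, Finset.sum_range_succ, ih]
    ring_nf
    try omega

lemma card_upperIdx (n : ℕ) : Nat.card (UpperIdx n) = n * (2 * n + 1) := by
  have e1 : UpperIdx n ≃ {p : Fin (n + n) × Fin (n + n) // p.1 ≤ p.2} :=
    Equiv.subtypeEquiv (Equiv.prodCongr finSumFinEquiv finSumFinEquiv) (fun a => Iff.rfl)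
  rw [Nat.card_congr (e1.trans (upperIdxSigmaEquiv (n + n))), Nat.card_eq_fintype_card,
    Fintype.card_sigma]
  simp only [Fintype.card_fin]
  rw [Fin.sum_univ_eq_sum_range (fun k => k + 1) (n + n), sum_range_aux]

/-- Symmetric matrices with entries killed by `φ`. -/
def SymKilled (φ : R →+* R') (n : ℕ) : Type :=
  {P : Matrix (Fin n ⊕ Fin n) (Fin n ⊕ Fin n) R // Killed φ P ∧ Pᵀ = P}

noncomputable def symKilledEquiv (φ : R →+* R') (n : ℕ) :
    SymKilled φ n ≃ (UpperIdx n → {x : R // φ x = 0}) where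
  toFun P p := ⟨P.val p.val.1 p.val.2, P.2.1 _ _⟩
  invFun g := ⟨Matrix.of fun i j =>
      if h : finSumFinEquiv i ≤ finSumFinEquiv j then (g ⟨(i, j), h⟩).val
      else (g ⟨(j, i), le_of_not_ge h⟩).val, by
    constructor
    · intro i j
      simp only [Matrix.of_apply]
      split
      · exact (g _).2
      · exact (g _).2
    · ext i j
      simp only [Matrix.transpose_apply, Matrix.of_apply]
      rcases le_or_gt (finSumFinEquiv j) (finSumFinEquiv i) with h1 | h1
      · rcases eq_or_lt_of_le h1 with h2 | h2
        · have hij : j = i := finSumFinEquiv.injective (le_antisymm h2.le h2.ge)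
          subst hij
          rfl
        · rw [dif_neg (not_le_of_gt h2), dif_pos h1]
      · rw [dif_pos h1.le, dif_neg (not_le_of_gt h1)]⟩
  left_inv P := by
    apply Subtype.ext
    ext i j
    simp only [Matrix.of_apply]
    split
    · rfl
    · conv_rhs => rw [← P.2.2]
      rfl
  right_inv g := by
    funext p
    apply Subtype.ext
    obtain ⟨⟨i, j⟩, h⟩ := p
    simp only [Matrix.of_apply, dif_pos h]

lemma card_symKilled (φ : R →+* R') (n : ℕ) :
    Nat.card (SymKilled φ n) = Nat.card {x : R // φ x = 0} ^ (n * (2 * n + 1)) := by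
  rw [Nat.card_congr (symKilledEquiv φ n), Nat.card_fun, card_upperIdx]


section Ker
variable (φ : R →+* R') (hsq : ∀ x y : R, φ x = 0 → φ y = 0 → x * y = 0)

/-- An element of the kernel of `Sphom φ` has its "A - 1" killed by `φ`. -/
lemma killed_of_mem_ker {A : SpGroup n R} (hA : A ∈ (Sphom (n := n) φ).ker) :
    Killed φ (A.val.val - 1) := by
  rw [MonoidHom.mem_ker] at hA
  have h1 : φ.mapMatrix A.val.val = 1 := by
    have := congrArg (fun B : SpGroup n R' => B.val.val) hA
    simpa [Sphom_coe] using this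
  intro i j
  have := congrFun (congrFun (congrArg (fun X => (X : Matrix _ _ R')) h1) i) j
  simp only [RingHom.mapMatrix_apply, Matrix.map_apply] at this
  simp only [Matrix.sub_apply, map_sub, this, Matrix.one_apply]
  split <;> simp

/-- For `M` with killed entries, `1 + M` is invertible, symplectic-compatible unit. -/
noncomputable def unitOfKilled {M : Matrix (Fin n ⊕ Fin n) (Fin n ⊕ Fin n) R}
    (hM : Killed φ M) (hMM : M * M = 0) :
    Matrix.GeneralLinearGroup (Fin n ⊕ Fin n) R :=
  ⟨1 + M, 1 - M,
    by have h : (1 + M) * (1 - M) = 1 - M * M := by noncomm_ring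
       rw [h, hMM, sub_zero],
    by have h : (1 - M) * (1 + M) = 1 - M * M := by noncomm_ring
       rw [h, hMM, sub_zero]⟩

include hsq in
lemma sp_cond_iff {M : Matrix (Fin n ⊕ Fin n) (Fin n ⊕ Fin n) R} (hM : Killed φ M) :
    (1 + M)ᵀ * Jmat n R * (1 + M) = Jmat n R ↔
      Mᵀ * Jmat n R + Jmat n R * M = 0 := by
  have hz : Mᵀ * (Jmat n R * M) = 0 :=
    Killed.mul_eq_zero φ hsq (hM.transpose φ) (hM.mul_left φ _)
  have expand : (1 + M)ᵀ * Jmat n R * (1 + M) =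
      Jmat n R + (Mᵀ * Jmat n R + Jmat n R * M) + Mᵀ * (Jmat n R * M) := by
    rw [transpose_add, transpose_one]; noncomm_ring
  rw [expand, hz, add_zero]
  constructor
  · intro h
    have := congrArg (fun X => X - Jmat n R) h
    simpa using this
  · intro h; rw [h, add_zero]

lemma Jmat_mul_neg (P : Matrix (Fin n ⊕ Fin n) (Fin n ⊕ Fin n) R) :
    Jmat n R * -(Jmat n R * P) = P := by
  rw [Matrix.mul_neg, ← mul_assoc, Jmat_mul_Jmat, neg_one_mul, neg_neg]

lemma neg_Jmul_transpose {P : Matrix (Fin n ⊕ Fin n) (Fin n ⊕ Fin n) R} (hsym : Pᵀ = P) :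
    (-(Jmat n R * P))ᵀ * Jmat n R = -P := by
  rw [transpose_neg, transpose_mul, Jmat_transpose, hsym]
  rw [Matrix.mul_neg, neg_neg, mul_assoc, Jmat_mul_Jmat]
  simp

/-- The kernel of `Sphom φ` is in bijection with symmetric killed matrices. -/
noncomputable def kerEquiv : (Sphom (n := n) φ).ker ≃ SymKilled φ n where
  toFun A := ⟨Jmat n R * (A.val.val.val - 1), by
    have hM : Killed φ (A.val.val.val - 1) := killed_of_mem_ker φ A.2
    refine ⟨hM.mul_left φ _, ?_⟩
    set M := A.val.val.val - 1 with hMdef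
    have hA1 : A.val.val.val = 1 + M := eq_add_of_sub_eq' rfl
    have hsp : (1 + M)ᵀ * Jmat n R * (1 + M) = Jmat n R := by
      rw [← hA1]; exact (mem_SpGroup_iff).mp A.val.2
    have h0 : Mᵀ * Jmat n R + Jmat n R * M = 0 := (sp_cond_iff φ hsq hM).mp hsp
    have h1 : Mᵀ * Jmat n R = -(Jmat n R * M) := by
      have := congrArg (fun X => X - Jmat n R * M) h0
      simpa using this
    rw [transpose_mul, Jmat_transpose, Matrix.mul_neg, h1, neg_neg]⟩
  invFun P := ⟨⟨unitOfKilled φ ((P.2.1.mul_left φ (Jmat n R)).neg φ)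
      (Killed.mul_eq_zero φ hsq ((P.2.1.mul_left φ (Jmat n R)).neg φ)
        ((P.2.1.mul_left φ (Jmat n R)).neg φ)), by
    set M := -(Jmat n R * P.val) with hMdef
    rw [mem_SpGroup_iff]
    show (1 + M)ᵀ * Jmat n R * (1 + M) = Jmat n R
    rw [sp_cond_iff φ hsq ((P.2.1.mul_left φ (Jmat n R)).neg φ)]
    show (-(Jmat n R * P.val))ᵀ * Jmat n R + Jmat n R * -(Jmat n R * P.val) = 0
    rw [neg_Jmul_transpose P.2.2, Jmat_mul_neg, neg_add_cancel]⟩, by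
    rw [MonoidHom.mem_ker]
    apply Subtype.ext
    apply Units.ext
    rw [Sphom_coe]
    show φ.mapMatrix (1 + -(Jmat n R * P.val)) = ((1 : SpGroup n R') : Matrix.GeneralLinearGroup (Fin n ⊕ Fin n) R').val
    rw [_root_.map_add, _root_.map_one, (killed_iff_mapMatrix φ _).mp ((P.2.1.mul_left φ (Jmat n R)).neg φ),
      add_zero]
    rfl⟩
  left_inv A := by
    apply Subtype.ext
    apply Subtype.ext
    apply Units.ext
    show 1 + -(Jmat n R * (Jmat n R * (A.val.val.val - 1))) = A.val.val.val
    rw [← mul_assoc, Jmat_mul_Jmat, neg_one_mul, neg_neg]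
    exact (eq_add_of_sub_eq' rfl).symm
  right_inv P := by
    apply Subtype.ext
    show Jmat n R * (1 + -(Jmat n R * P.val) - 1) = P.val
    rw [show (1 : Matrix (Fin n ⊕ Fin n) (Fin n ⊕ Fin n) R) + -(Jmat n R * P.val) - 1
        = -(Jmat n R * P.val) by abel, Jmat_mul_neg]

end Ker


section Surj
variable (φ : R →+* R') (hsurj : Function.Surjective φ)
  (hsq : ∀ x y : R, φ x = 0 → φ y = 0 → x * y = 0)

include hsq in
lemma isUnit_of_map_isUnit (x : R) (h : IsUnit (φ x)) (hsurj : Function.Surjective φ) :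
    IsUnit x := by
  obtain ⟨w, hw⟩ := hsurj (↑h.unit⁻¹ : R')
  set z := x * w - 1 with hz
  have hφz : φ z = 0 := by
    rw [hz, map_sub, _root_.map_mul, hw, _root_.map_one]
    simp [h.mul_val_inv]
  have hz2 : z * z = 0 := hsq z z hφz hφz
  refine IsUnit.of_mul_eq_one (w * (1 - z)) ?_
  have hxw : x * w = 1 + z := eq_add_of_sub_eq' rfl
  calc x * (w * (1 - z)) = (x * w) * (1 - z) := by rw [mul_assoc]
    _ = (1 + z) * (1 - z) := by rw [hxw]
    _ = 1 - z * z := by noncomm_ring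
    _ = 1 := by rw [hz2, sub_zero]

lemma neg_Jmul_transpose_mul (T : Matrix (Fin n ⊕ Fin n) (Fin n ⊕ Fin n) R) :
    (-(Jmat n R * T))ᵀ * Jmat n R = -Tᵀ := by
  rw [transpose_neg, transpose_mul, Jmat_transpose, Matrix.mul_neg, neg_neg,
    mul_assoc, Jmat_mul_Jmat, Matrix.mul_neg, mul_one]

lemma Jmat_diag (i : Fin n ⊕ Fin n) : Jmat n R i i = 0 := by
  rcases i with i | i <;> simp [Jmat, fromBlocks]

include hsurj hsq in
theorem sphom_surjective : Function.Surjective (Sphom (n := n) φ) := by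
  intro B'
  set N' : Matrix (Fin n ⊕ Fin n) (Fin n ⊕ Fin n) R' := B'.val.val with hN'
  -- lift entries
  have hlift : ∃ B0 : Matrix (Fin n ⊕ Fin n) (Fin n ⊕ Fin n) R, φ.mapMatrix B0 = N' := by
    refine ⟨Matrix.of fun i j => (hsurj (N' i j)).choose, ?_⟩
    ext i j
    simpa using (hsurj (N' i j)).choose_spec
  obtain ⟨B0, hB0⟩ := hlift
  have hdet : IsUnit B0.det := by
    apply isUnit_of_map_isUnit φ hsq
    · rw [RingHom.map_det, hB0]
      exact (Matrix.isUnit_iff_isUnit_det N').mp B'.val.isUnit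
    · exact hsurj
  have hB0unit : IsUnit B0 := (Matrix.isUnit_iff_isUnit_det B0).mpr hdet
  -- the error matrix
  set E : Matrix (Fin n ⊕ Fin n) (Fin n ⊕ Fin n) R := B0ᵀ * Jmat n R * B0 - Jmat n R with hE
  have hEkilled : Killed φ E := by
    rw [killed_iff_mapMatrix]
    rw [hE, map_sub, _root_.map_mul, _root_.map_mul]
    have ht : φ.mapMatrix B0ᵀ = N'ᵀ := by
      rw [RingHom.mapMatrix_apply, Matrix.transpose_map, ← RingHom.mapMatrix_apply, hB0]
    have hJ : φ.mapMatrix (Jmat n R) = Jmat n R' := by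
      rw [RingHom.mapMatrix_apply, map_Jmat]
    rw [ht, hJ, hB0, (mem_SpGroup_iff).mp B'.2, sub_self]
  have hEskew : Eᵀ = -E := by
    rw [hE, transpose_sub, conj_skew, Jmat_transpose]
    abel
  have hEdiag : ∀ i, E i i = 0 := by
    intro i
    rw [hE, Matrix.sub_apply, conj_diag_zero, Jmat_diag, sub_zero]
  -- the correction matrix
  set T : Matrix (Fin n ⊕ Fin n) (Fin n ⊕ Fin n) R := Matrix.of fun i j =>
    if finSumFinEquiv i < finSumFinEquiv j then -(E i j) else 0 with hT
  have hTkilled : Killed φ T := by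
    intro i j
    rw [hT]
    simp only [Matrix.of_apply]
    split
    · rw [map_neg, hEkilled i j, neg_zero]
    · exact map_zero φ
  have hTT : T - Tᵀ = -E := by
    ext i j
    simp only [Matrix.sub_apply, Matrix.transpose_apply, Matrix.neg_apply, hT, Matrix.of_apply]
    rcases lt_trichotomy (finSumFinEquiv i) (finSumFinEquiv j) with h | h | h
    · rw [if_pos h, if_neg (not_lt_of_gt h), sub_zero]
    · have : i = j := finSumFinEquiv.injective h
      subst this
      rw [if_neg (lt_irrefl _), hEdiag i, sub_zero, neg_zero]
    · have hEji : E j i = -E i j := by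
        have := congrFun (congrFun hEskew j) i
        have h2 := congrFun (congrFun hEskew j) i
        simp only [Matrix.transpose_apply, Matrix.neg_apply] at h2
        linear_combination h2
      rw [if_neg (not_lt_of_gt h), if_pos h, hEji, zero_sub, neg_neg]
  set N : Matrix (Fin n ⊕ Fin n) (Fin n ⊕ Fin n) R := -(Jmat n R * T) with hN
  have hNkilled : Killed φ N := (hTkilled.mul_left φ _).neg φ
  have hJN : Jmat n R * N = T := by rw [hN]; exact Jmat_mul_neg T
  have hNJ : Nᵀ * Jmat n R = -Tᵀ := by
    rw [hN]; exact neg_Jmul_transpose_mul T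
  have hNN : N * N = 0 := Killed.mul_eq_zero φ hsq hNkilled hNkilled
  set U : Matrix.GeneralLinearGroup (Fin n ⊕ Fin n) R := unitOfKilled φ hNkilled hNN with hU
  have hUval : (U : Matrix (Fin n ⊕ Fin n) (Fin n ⊕ Fin n) R) = 1 + N := rfl
  set A : Matrix.GeneralLinearGroup (Fin n ⊕ Fin n) R := hB0unit.unit * U with hA
  have hAval : (A : Matrix (Fin n ⊕ Fin n) (Fin n ⊕ Fin n) R) = B0 * (1 + N) := by
    rw [hA, Units.val_mul, hUval, hB0unit.unit_spec]
  -- A is symplectic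
  have hmem : A ∈ SpGroup n R := by
    rw [mem_SpGroup_iff, hAval]
    have step1 : (B0 * (1 + N))ᵀ * Jmat n R * (B0 * (1 + N))
        = (1 + Nᵀ) * (B0ᵀ * Jmat n R * B0) * (1 + N) := by
      rw [transpose_mul, transpose_add, transpose_one]
      noncomm_ring
    have hBJB : B0ᵀ * Jmat n R * B0 = Jmat n R + E := by rw [hE]; abel
    have hNE : Nᵀ * E = 0 := Killed.mul_eq_zero φ hsq (hNkilled.transpose φ) hEkilled
    have hEN : E * N = 0 := Killed.mul_eq_zero φ hsq hEkilled hNkilled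
    have hNJN : Nᵀ * (Jmat n R * N) = 0 := by
      rw [hJN]; exact Killed.mul_eq_zero φ hsq (hNkilled.transpose φ) hTkilled
    have hexp : (1 + Nᵀ) * (Jmat n R + E) * (1 + N)
        = Jmat n R + E + (Nᵀ * Jmat n R + Jmat n R * N)
          + (Nᵀ * E + E * N + Nᵀ * (Jmat n R * N) + Nᵀ * (E * N)) := by
      noncomm_ring
    rw [step1, hBJB, hexp, hNE, hEN, hNJN, hNJ, hJN]
    rw [show -Tᵀ + T = -E by rw [← hTT]; abel]
    simp
  refine ⟨⟨A, hmem⟩, ?_⟩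
  apply Subtype.ext
  apply Units.ext
  rw [Sphom_coe]
  show φ.mapMatrix (A : Matrix (Fin n ⊕ Fin n) (Fin n ⊕ Fin n) R) = N'
  rw [hAval, _root_.map_mul, _root_.map_add, _root_.map_one, hB0,
    (killed_iff_mapMatrix φ N).mp hNkilled, add_zero, mul_one]

end Surj


lemma card_step (φ : R →+* R') (hsurj : Function.Surjective φ)
    (hsq : ∀ x y : R, φ x = 0 → φ y = 0 → x * y = 0) :
    Nat.card (SpSet n R)
      = Nat.card {x : R // φ x = 0} ^ (n * (2 * n + 1)) * Nat.card (SpSet n R') := by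
  rw [card_SpSet_eq, card_SpSet_eq,
    Subgroup.card_eq_card_quotient_mul_card_subgroup (Sphom (n := n) φ).ker,
    Nat.card_congr (QuotientGroup.quotientKerEquivOfSurjective _
      (sphom_surjective φ hsurj hsq)).toEquiv,
    Nat.card_congr (kerEquiv φ hsq), card_symKilled, mul_comm]

section NumberTheory

variable (K : Type) [Field K] [NumberField K]

local notation "O" => NumberField.RingOfIntegers K

lemma card_quot_pow (𝔭 : Ideal O) (hbot : 𝔭 ≠ ⊥) (k : ℕ) :
    Nat.card (O ⧸ 𝔭 ^ k) = Nat.card (O ⧸ 𝔭) ^ k := by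
  have h1 : ∀ j : ℕ, Nat.card (O ⧸ 𝔭 ^ j) = Ideal.absNorm (𝔭 ^ j) := by
    intro j
    rw [Ideal.absNorm_apply, Submodule.cardQuot_apply]
  rw [h1, map_pow]
  have h2 : Ideal.absNorm 𝔭 = Nat.card (O ⧸ 𝔭) := by
    rw [Ideal.absNorm_apply, Submodule.cardQuot_apply]
  rw [h2]

lemma factor_surjective (I J : Ideal O) (h : I ≤ J) :
    Function.Surjective (Ideal.Quotient.factor (S := I) (T := J) h) := by
  intro y
  obtain ⟨a, rfl⟩ := Ideal.Quotient.mk_surjective y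
  exact ⟨Ideal.Quotient.mk I a, Ideal.Quotient.factor_mk h a⟩

lemma factor_sq_zero (𝔭 : Ideal O) (m : ℕ) (hm : 1 ≤ m) :
    ∀ x y : O ⧸ 𝔭 ^ (m + 1),
      Ideal.Quotient.factor (S := 𝔭 ^ (m + 1)) (T := 𝔭 ^ m) (Ideal.pow_le_pow_right (Nat.le_succ m)) x = 0 →
      Ideal.Quotient.factor (S := 𝔭 ^ (m + 1)) (T := 𝔭 ^ m) (Ideal.pow_le_pow_right (Nat.le_succ m)) y = 0 →
      x * y = 0 := by
  intro x y hx hy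
  obtain ⟨a, rfl⟩ := Ideal.Quotient.mk_surjective x
  obtain ⟨b, rfl⟩ := Ideal.Quotient.mk_surjective y
  rw [Ideal.Quotient.factor_mk, Ideal.Quotient.eq_zero_iff_mem] at hx
  rw [Ideal.Quotient.factor_mk, Ideal.Quotient.eq_zero_iff_mem] at hy
  rw [← _root_.map_mul, Ideal.Quotient.eq_zero_iff_mem]
  have hab : a * b ∈ 𝔭 ^ m * 𝔭 ^ m := Ideal.mul_mem_mul hx hy
  rw [← pow_add] at hab
  exact Ideal.pow_le_pow_right (by omega) hab

lemma card_ker_factor (𝔭 : Ideal O) (hbot : 𝔭 ≠ ⊥) (m : ℕ) (hm : 1 ≤ m) :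
    Nat.card {x : O ⧸ 𝔭 ^ (m + 1) //
      Ideal.Quotient.factor (S := 𝔭 ^ (m + 1)) (T := 𝔭 ^ m) (Ideal.pow_le_pow_right (Nat.le_succ m)) x = 0}
      = Nat.card (O ⧸ 𝔭) := by
  set φ := Ideal.Quotient.factor (S := 𝔭 ^ (m + 1)) (T := 𝔭 ^ m) (Ideal.pow_le_pow_right (Nat.le_succ m))
    with hφ
  set ψ : (O ⧸ 𝔭 ^ (m + 1)) →+ (O ⧸ 𝔭 ^ m) := AddMonoidHom.mk' φ (map_add φ) with hψ
  have hsurj : Function.Surjective ψ := by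
    intro y
    obtain ⟨x, hx⟩ := factor_surjective K _ _ (Ideal.pow_le_pow_right (Nat.le_succ m)) y
    exact ⟨x, hx⟩
  haveI : Fintype (O ⧸ 𝔭 ^ (m + 1)) :=
    @Fintype.ofFinite _ (Ideal.finiteQuotientOfFreeOfNeBot _ (pow_ne_zero _ hbot))
  haveI : Fintype (O ⧸ 𝔭) := @Fintype.ofFinite _ (Ideal.finiteQuotientOfFreeOfNeBot _ hbot)
  have hcards := AddSubgroup.card_eq_card_quotient_mul_card_addSubgroup ψ.ker
  rw [Nat.card_congr (QuotientAddGroup.quotientKerEquivOfSurjective ψ hsurj).toEquiv] at hcards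
  rw [card_quot_pow K 𝔭 hbot (m + 1), card_quot_pow K 𝔭 hbot m] at hcards
  set q := Nat.card (O ⧸ 𝔭) with hq
  have hqpos : 0 < q := Nat.card_pos
  have hker : Nat.card {x : O ⧸ 𝔭 ^ (m + 1) // φ x = 0} = Nat.card ψ.ker := by
    apply Nat.card_congr
    exact Equiv.subtypeEquivRight (fun x => by simp [hψ, AddMonoidHom.mem_ker])
  rw [hker]
  have : q ^ (m + 1) = q ^ m * q := by ring
  rw [this] at hcards
  exact (Nat.eq_of_mul_eq_mul_left (pow_pos hqpos m) hcards.symm)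



lemma step_lemma (𝔭 : Ideal O) (hbot : 𝔭 ≠ ⊥) (m : ℕ) (hm : 1 ≤ m) (n : ℕ) :
    Nat.card (SpSet n (O ⧸ 𝔭 ^ (m + 1)))
      = Nat.card (O ⧸ 𝔭) ^ (2 * n ^ 2 + n) * Nat.card (SpSet n (O ⧸ 𝔭 ^ m)) := by
  rw [card_step (Ideal.Quotient.factor (S := 𝔭 ^ (m + 1)) (T := 𝔭 ^ m)
        (Ideal.pow_le_pow_right (Nat.le_succ m)))
      (factor_surjective K _ _ _) (factor_sq_zero K 𝔭 m hm),
    card_ker_factor K 𝔭 hbot m hm]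
  congr 1
  rw [show n * (2 * n + 1) = 2 * n ^ 2 + n by ring]

lemma main_aux (𝔭 : Ideal O) (hbot : 𝔭 ≠ ⊥) (n : ℕ) :
    ∀ f, 1 ≤ f → Nat.card (SpSet n (O ⧸ 𝔭 ^ f))
      = Nat.card (O ⧸ 𝔭) ^ ((2 * n ^ 2 + n) * (f - 1)) * Nat.card (SpSet n (O ⧸ 𝔭)) := by
  intro f hf
  induction f, hf using Nat.le_induction with
  | base =>
    have h : 𝔭 ^ 1 = 𝔭 := pow_one 𝔭
    rw [h]
    simp
  | succ m hm ih =>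
    obtain ⟨k, rfl⟩ : ∃ k, m = k + 1 := ⟨m - 1, (Nat.succ_pred_eq_of_pos hm).symm⟩
    rw [step_lemma K 𝔭 hbot (k + 1) hm n, ih]
    rw [← mul_assoc, ← pow_add]
    congr 2
    simp only [Nat.add_sub_cancel]
    ring

theorem card_Sp_quotient_pow' (𝔭 : Ideal O) (hprime : 𝔭.IsPrime) (hbot : 𝔭 ≠ ⊥)
    (f n : ℕ) (hf : 1 ≤ f) (q : ℕ) (hq : q = Nat.card (O ⧸ 𝔭)) :
    Nat.card (SpSet n (O ⧸ 𝔭 ^ f)) =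
      q ^ ((2 * n ^ 2 + n) * (f - 1)) * Nat.card (SpSet n (O ⧸ 𝔭)) := by
  rw [hq]
  exact main_aux K 𝔭 hbot n f hf

end NumberTheory

/-- `|Sp_{2n}(O/𝔭^f)| = q^{(2n²+n)(f-1)} · |Sp_{2n}(F_q)|` where `q = |O/𝔭|`. -/
theorem card_Sp_quotient_pow (K : Type) [Field K] [NumberField K]
    (𝔭 : Ideal (NumberField.RingOfIntegers K)) (hprime : 𝔭.IsPrime) (hbot : 𝔭 ≠ ⊥)
    (f n : ℕ) (hf : 1 ≤ f) (q : ℕ) (hq : q = Nat.card (NumberField.RingOfIntegers K ⧸ 𝔭)) :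
    Nat.card (SpSet n (NumberField.RingOfIntegers K ⧸ 𝔭 ^ f)) =
      q ^ ((2 * n ^ 2 + n) * (f - 1)) *
        Nat.card (SpSet n (NumberField.RingOfIntegers K ⧸ 𝔭)) := by
  exact card_Sp_quotient_pow' K 𝔭 hprime hbot f n hf q hq
end

section
/- Let O be the ring of integers of a number field, 𝔭 a nonzero prime ideal with residue field of cardinality q, f ≥ 1, and 1 ≤ m ≤ f−1. Then the order of the m-th symplectic group Sp_{2n}^{(m)}(O/𝔭^f) equals q^{4n²(f−m)} · |Sp_{2n}(O/𝔭^m)|. -/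
open scoped Classical
open Matrix

/-- Counting preimages under a surjective group hom. -/
lemma card_preimage_hom {G H : Type*} [Group G] [Group H] (φ : G →* H)
    (hs : Function.Surjective φ) (T : Set H) :
    Nat.card (φ ⁻¹' T) = Nat.card {g : G // φ g = 1} * Nat.card T := by
  have e : (φ ⁻¹' T) ≃ {g : G // φ g = 1} × T :=
    { toFun := fun g => (⟨(Function.surjInv hs (φ g.1))⁻¹ * g.1, by
        simp [Function.surjInv_eq hs]⟩, ⟨φ g.1, g.2⟩)
      invFun := fun p => ⟨Function.surjInv hs p.2.1 * p.1.1, by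
        have : φ (Function.surjInv hs p.2.1 * p.1.1) = p.2.1 := by
          simp [p.1.2, Function.surjInv_eq hs]
        simp only [Set.mem_preimage, this]; exact p.2.2⟩
      left_inv := fun g => by
        simp
      right_inv := fun p => by
        have h1 : φ (Function.surjInv hs p.2.1 * p.1.1) = p.2.1 := by
          simp [p.1.2, Function.surjInv_eq hs]
        ext
        · simp [h1]
        · simp [h1] }
  rw [Nat.card_congr e, Nat.card_prod]

/-- Counting preimages under a surjective additive group hom. -/
lemma card_preimage_addhom {G H : Type*} [AddGroup G] [AddGroup H] (φ : G →+ H)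
    (hs : Function.Surjective φ) (T : Set H) :
    Nat.card (φ ⁻¹' T) = Nat.card {g : G // φ g = 0} * Nat.card T := by
  have e : (φ ⁻¹' T) ≃ {g : G // φ g = 0} × T :=
    { toFun := fun g => (⟨-(Function.surjInv hs (φ g.1)) + g.1, by
        simp [Function.surjInv_eq hs]⟩, ⟨φ g.1, g.2⟩)
      invFun := fun p => ⟨Function.surjInv hs p.2.1 + p.1.1, by
        have : φ (Function.surjInv hs p.2.1 + p.1.1) = p.2.1 := by
          simp [p.1.2, Function.surjInv_eq hs]
        simp only [Set.mem_preimage, this]; exact p.2.2⟩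
      left_inv := fun g => by simp
      right_inv := fun p => by
        have h1 : φ (Function.surjInv hs p.2.1 + p.1.1) = p.2.1 := by
          simp [p.1.2, Function.surjInv_eq hs]
        ext
        · simp [h1]
        · simp [h1] }
  rw [Nat.card_congr e, Nat.card_prod]

lemma isUnit_of_map_isUnit_s4 {R S : Type*} [CommRing R] [CommRing S] (π : R →+* S)
    (hsurj : Function.Surjective π) (hnil : ∀ x, π x = 0 → IsNilpotent x)
    {x : R} (h : IsUnit (π x)) : IsUnit x := by
  obtain ⟨u, hu⟩ := h
  obtain ⟨y, hy⟩ := hsurj (↑u⁻¹ : S)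
  have hz : π (x * y - 1) = 0 := by
    rw [map_sub, _root_.map_mul, ← hu, hy, _root_.map_one, Units.mul_inv, sub_self]
  have h1 : IsUnit (x * y) := by
    have := (hnil _ hz).isUnit_one_add
    simpa using this
  exact isUnit_of_mul_isUnit_left h1

section GLsec
variable {R S : Type} [CommRing R] [CommRing S] {ι : Type} [Fintype ι] [DecidableEq ι]

/-- Lift a matrix over `S` with invertible image to an invertible matrix over `R`. -/
lemma isUnit_matrix_of_map (π : R →+* S) (hsurj : Function.Surjective ⇑π)
    (hnil : ∀ x, π x = 0 → IsNilpotent x) (M : Matrix ι ι R)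
    (h : IsUnit (π.mapMatrix M)) : IsUnit M := by
  rw [Matrix.isUnit_iff_isUnit_det]
  apply isUnit_of_map_isUnit_s4 π hsurj hnil
  rw [RingHom.map_det]
  exact (Matrix.isUnit_iff_isUnit_det _).mp h

lemma mapMatrix_GL_surjective (π : R →+* S) (hsurj : Function.Surjective ⇑π)
    (hnil : ∀ x, π x = 0 → IsNilpotent x) :
    Function.Surjective
      (Units.map (π.mapMatrix : Matrix ι ι R →+* Matrix ι ι S).toMonoidHom) := by
  intro B
  set M : Matrix ι ι R := Matrix.of fun i j =>
    Function.surjInv hsurj ((B : Matrix ι ι S) i j) with hM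
  have hmap : π.mapMatrix M = (B : Matrix ι ι S) := by
    ext i j
    simp [RingHom.mapMatrix_apply, Matrix.map_apply, hM, Function.surjInv_eq hsurj]
  have hU : IsUnit M := by
    apply isUnit_matrix_of_map π hsurj hnil
    rw [hmap]; exact B.isUnit
  refine ⟨hU.unit, ?_⟩
  ext : 1
  simp only [Units.coe_map, RingHom.toMonoidHom_eq_coe, MonoidHom.coe_coe, IsUnit.unit_spec]
  exact hmap

end GLsec

section Ker
variable {R S : Type} [CommRing R] [CommRing S] {ι : Type} [Fintype ι] [DecidableEq ι]

lemma card_ker_GLmap (π : R →+* S) (hsurj : Function.Surjective ⇑π)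
    (hnil : ∀ x, π x = 0 → IsNilpotent x) :
    Nat.card {g : GL ι R //
        Units.map (π.mapMatrix : Matrix ι ι R →+* Matrix ι ι S).toMonoidHom g = 1}
      = Nat.card {x : R // π x = 0} ^ (Fintype.card ι * Fintype.card ι) := by
  have e1 : {g : GL ι R //
        Units.map (π.mapMatrix : Matrix ι ι R →+* Matrix ι ι S).toMonoidHom g = 1}
      ≃ {M : Matrix ι ι R // π.mapMatrix M = 1} :=
    { toFun := fun g => ⟨(g.1 : Matrix ι ι R), by
        have := congrArg (Units.val) g.2
        simpa using this⟩
      invFun := fun M => by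
        have hU : IsUnit M.1 := by
          apply isUnit_matrix_of_map π hsurj hnil
          rw [M.2]; exact isUnit_one
        exact ⟨hU.unit, by
          ext : 1
          simp only [Units.coe_map, RingHom.toMonoidHom_eq_coe, MonoidHom.coe_coe,
            IsUnit.unit_spec, M.2, Units.val_one]⟩
      left_inv := fun g => by
        apply Subtype.ext
        apply Units.ext
        simp
      right_inv := fun M => by
        apply Subtype.ext
        simp }
  have e2 : {M : Matrix ι ι R // π.mapMatrix M = 1} ≃ {N : Matrix ι ι R // π.mapMatrix N = 0} :=
    { toFun := fun M => ⟨M.1 - 1, by rw [map_sub, M.2, _root_.map_one, sub_self]⟩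
      invFun := fun N => ⟨N.1 + 1, by rw [map_add, N.2, _root_.map_one, zero_add]⟩
      left_inv := fun M => by apply Subtype.ext; simp
      right_inv := fun N => by apply Subtype.ext; simp }
  have e3 : {N : Matrix ι ι R // π.mapMatrix N = 0}
      ≃ {x : ι → ι → R // ∀ i, ∀ j, π (x i j) = 0} := by
    refine Equiv.subtypeEquiv (Equiv.refl _) fun N => ?_
    rw [← Matrix.ext_iff]
    simp [RingHom.mapMatrix_apply, Matrix.map_apply]
    exact Iff.rfl
  have e4 : {x : ι → ι → R // ∀ i, ∀ j, π (x i j) = 0}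
      ≃ ∀ _ : ι, {y : ι → R // ∀ j, π (y j) = 0} :=
    Equiv.subtypePiEquivPi (β := fun _ : ι => ι → R) (p := fun _ y => ∀ j, π (y j) = 0)
  have e5 : (∀ _ : ι, {y : ι → R // ∀ j, π (y j) = 0})
      ≃ ∀ _ : ι, ∀ _ : ι, {x : R // π x = 0} :=
    Equiv.piCongrRight fun _ => Equiv.subtypePiEquivPi (β := fun _ : ι => R) (p := fun _ x => π x = 0)
  rw [Nat.card_congr ((((e1.trans e2).trans e3).trans e4).trans e5)]
  rw [Nat.card_fun, Nat.card_fun, Nat.card_eq_fintype_card (α := ι), ← pow_mul, mul_comm]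

end Ker

lemma mapMatrix_Jmat {R S : Type} [CommRing R] [CommRing S] (π : R →+* S) (n : ℕ) :
    π.mapMatrix (Jmat n R) = Jmat n S := by
  have h0 : (0 : Matrix (Fin n) (Fin n) R).map ⇑π = 0 := Matrix.map_zero _ (map_zero π)
  have h1 : (1 : Matrix (Fin n) (Fin n) R).map ⇑π = 1 :=
    Matrix.map_one _ (map_zero π) (map_one π)
  have hneg : (-1 : Matrix (Fin n) (Fin n) R).map ⇑π = -1 := by
    ext i j
    by_cases h : i = j <;>
      simp [Matrix.map_apply, Matrix.neg_apply, Matrix.one_apply, h]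
  rw [Jmat, Jmat, RingHom.mapMatrix_apply, Matrix.fromBlocks_map, h0, h1, hneg]

set_option maxHeartbeats 1000000 in
set_option synthInstance.maxHeartbeats 400000 in
/-- `|Sp_{2n}^{(m)}(O/𝔭^f)| = q^{4n²(f-m)} · |Sp_{2n}(O/𝔭^m)|` for `1 ≤ m ≤ f - 1`. -/
theorem card_Spm (K : Type) [Field K] [NumberField K]
    (𝔭 : Ideal (NumberField.RingOfIntegers K)) (hprime : 𝔭.IsPrime) (hbot : 𝔭 ≠ ⊥)
    (f n m : ℕ) (hf : 1 ≤ f) (hm : 1 ≤ m) (hmf : m ≤ f - 1)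
    (q : ℕ) (hq : q = Nat.card (NumberField.RingOfIntegers K ⧸ 𝔭)) :
    Nat.card (SpmSet n 𝔭 f m (le_trans hmf (Nat.sub_le f 1))) =
      q ^ (4 * n ^ 2 * (f - m)) *
        Nat.card (SpSet n (NumberField.RingOfIntegers K ⧸ 𝔭 ^ m)) := by
  set O := NumberField.RingOfIntegers K
  have hmle : m ≤ f := le_trans hmf (Nat.sub_le f 1)
  -- cardinalities of quotients
  have hcard : ∀ k : ℕ, Nat.card (O ⧸ 𝔭 ^ k) = q ^ k := by
    intro k
    have h1 : Nat.card (O ⧸ 𝔭 ^ k) = Ideal.absNorm (𝔭 ^ k) := by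
      rw [Ideal.absNorm_apply, Submodule.cardQuot_apply]
    have h2 : q = Ideal.absNorm 𝔭 := by
      rw [hq, Ideal.absNorm_apply, Submodule.cardQuot_apply]
    rw [h1, map_pow, h2]
  have hq0 : q ≠ 0 := by
    rw [show q = Ideal.absNorm 𝔭 by rw [hq, Ideal.absNorm_apply, Submodule.cardQuot_apply]]
    rw [Ne, Ideal.absNorm_eq_zero_iff]
    exact hbot
  have hFf : Finite (O ⧸ 𝔭 ^ f) := by
    apply Nat.finite_of_card_ne_zero
    rw [hcard]; exact pow_ne_zero _ hq0
  have hFm : Finite (O ⧸ 𝔭 ^ m) := by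
    apply Nat.finite_of_card_ne_zero
    rw [hcard]; exact pow_ne_zero _ hq0
  set π := Ideal.Quotient.factor (S := 𝔭 ^ f) (T := 𝔭 ^ m) (Ideal.pow_le_pow_right hmle) with hπ
  have hπs : Function.Surjective ⇑π := by
    intro y
    obtain ⟨a, rfl⟩ := Ideal.Quotient.mk_surjective y
    exact ⟨Ideal.Quotient.mk _ a, Ideal.Quotient.factor_mk _ a⟩
  have hπnil : ∀ x, π x = 0 → IsNilpotent x := by
    intro x hx
    obtain ⟨a, rfl⟩ := Ideal.Quotient.mk_surjective x
    rw [Ideal.Quotient.factor_mk, Ideal.Quotient.eq_zero_iff_mem] at hx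
    have ha : a ∈ 𝔭 := Ideal.pow_le_self (by omega) hx
    refine ⟨f, ?_⟩
    rw [← map_pow, Ideal.Quotient.eq_zero_iff_mem]
    exact Ideal.pow_mem_pow ha f
  -- kernel of π has q^(f-m) elements
  have hkerπ : Nat.card {x : O ⧸ 𝔭 ^ f // π x = 0} = q ^ (f - m) := by
    have h2 := card_preimage_addhom (π.toAddMonoidHom) hπs Set.univ
    simp only [Set.preimage_univ, Nat.card_univ] at h2
    have hconv : {g : O ⧸ 𝔭 ^ f // π.toAddMonoidHom g = 0} = {x : O ⧸ 𝔭 ^ f // π x = 0} := rfl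
    rw [hconv] at h2
    rw [hcard, hcard] at h2
    have h3 : q ^ f = q ^ (f - m) * q ^ m := by
      rw [← pow_add]
      congr 1
      omega
    rw [h3] at h2
    have := Nat.eq_of_mul_eq_mul_right (Nat.pos_of_ne_zero (pow_ne_zero m hq0)) h2.symm
    exact this
  -- the reduction map on GL
  set ι := (Fin n ⊕ Fin n)
  set φ : GL ι (O ⧸ 𝔭 ^ f) →* GL ι (O ⧸ 𝔭 ^ m) :=
    Units.map (π.mapMatrix : Matrix ι ι (O ⧸ 𝔭 ^ f) →+* Matrix ι ι (O ⧸ 𝔭 ^ m)).toMonoidHom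
    with hφ
  have hφs : Function.Surjective ⇑φ := mapMatrix_GL_surjective π hπs hπnil
  have hset : SpmSet n 𝔭 f m hmle = ⇑φ ⁻¹' (SpSet n (O ⧸ 𝔭 ^ m)) := by
    ext A
    simp only [SpmSet, SpSet, Set.mem_setOf_eq, Set.mem_preimage, hφ, Units.coe_map,
      RingHom.toMonoidHom_eq_coe, MonoidHom.coe_coe]
    rw [_root_.map_mul, _root_.map_mul, mapMatrix_Jmat π n]
    rw [show π.mapMatrix ((A : Matrix ι ι (O ⧸ 𝔭 ^ f))ᵀ) = (π.mapMatrix (A : Matrix ι ι (O ⧸ 𝔭 ^ f)))ᵀ by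
      rw [RingHom.mapMatrix_apply, RingHom.mapMatrix_apply, Matrix.transpose_map]]
    exact Iff.rfl
  rw [hset, card_preimage_hom φ hφs, card_ker_GLmap π hπs hπnil, hkerπ, ← pow_mul]
  congr 2
  simp only [ι, Fintype.card_sum, Fintype.card_fin]
  ring
end

section
/- Let 𝒫 be the set of isomorphism classes of finite abelian p-groups. For Z, G ∈ 𝒫, the following identity holds: Σ_{H∈𝒫} |{H₁ ≤ H : H₁ ≅ Z and H/H₁ ≅ G}| / |Aut(H)| = 1/(|Aut(Z)| · |Aut(G)|). -/
open scoped Classical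
open Matrix

/-- A bundled finite abelian `p`-group. -/
structure FinAbPGroup (p : ℕ) : Type 1 where
  carrier : Type
  [addCommGroup : AddCommGroup carrier]
  [finite : Finite carrier]
  card_isPPow : ∃ k : ℕ, Nat.card carrier = p ^ k

attribute [instance] FinAbPGroup.addCommGroup FinAbPGroup.finite

instance FinAbPGroup.isoSetoid (p : ℕ) : Setoid (FinAbPGroup p) where
  r G H := Nonempty (G.carrier ≃+ H.carrier)
  iseqv := ⟨fun _ => ⟨AddEquiv.refl _⟩, fun ⟨e⟩ => ⟨e.symm⟩, fun ⟨e⟩ ⟨f⟩ => ⟨e.trans f⟩⟩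

/-- Isomorphism classes of finite abelian `p`-groups. -/
def FinAbPGroupClass (p : ℕ) := Quotient (FinAbPGroup.isoSetoid p)

/-- A representative of each isomorphism class. -/
noncomputable def FinAbPGroupClass.rep {p : ℕ} (c : FinAbPGroupClass p) : FinAbPGroup p :=
  Quotient.out c

/-- The order of the automorphism group. -/
noncomputable def FinAbPGroup.autCard {p : ℕ} (G : FinAbPGroup p) : ℕ :=
  Nat.card (G.carrier ≃+ G.carrier)

/-- The number of subgroups `H₁ ≤ H` with `H₁ ≅ Z` and `H/H₁ ≅ G`. -/
noncomputable def subCount {p : ℕ} (H Z G : FinAbPGroup p) : ℕ :=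
  Nat.card {H₁ : AddSubgroup H.carrier //
    Nonempty (H₁ ≃+ Z.carrier) ∧ Nonempty ((H.carrier ⧸ H₁) ≃+ G.carrier)}


section Cocycle

variable {A Z : Type*} [AddCommGroup A] [AddCommGroup Z]

def IsSymCocycle (f : A → A → Z) : Prop :=
  (∀ y, f 0 y = 0) ∧ (∀ x y, f x y = f y x) ∧
    ∀ x y z, f x y + f (x + y) z = f y z + f x (y + z)

def SymCocycle (A Z : Type*) [AddCommGroup A] [AddCommGroup Z] :=
  {f : A → A → Z // IsSymCocycle f}

lemma IsSymCocycle.zero_right {f : A → A → Z} (hf : IsSymCocycle f) (x : A) : f x 0 = 0 := by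
  rw [hf.2.1]; exact hf.1 x

lemma IsSymCocycle.t3 {f : A → A → Z} (hf : IsSymCocycle f) (x y z : A) :
    f x y + f (x + y) z = f y z + f (y + z) x := by
  rw [hf.2.2 x y z, hf.2.1 x (y + z)]

end Cocycle

section Cyclic

variable {Z : Type*} [AddCommGroup Z] {m : ℕ} [NeZero m]

/-- partial sums of `a` along naturals, reduced mod `m`. -/
def cocS (a : ZMod m → Z) (n : ℕ) : Z := ∑ i ∈ Finset.range n, a (i : ZMod m)

lemma sum_range_zmod (g : ZMod m → Z) :
    ∑ i ∈ Finset.range m, g (i : ZMod m) = ∑ x : ZMod m, g x := by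
  refine Finset.sum_nbij' (fun i => (i : ZMod m)) (fun x => x.val) ?_ ?_ ?_ ?_ ?_ <;>
    intros <;> simp_all [ZMod.val_lt, ZMod.natCast_zmod_val, ZMod.val_cast_of_lt,
      Finset.mem_range, Nat.mod_eq_of_lt]

omit [NeZero m] in
lemma cocS_add (a : ZMod m → Z) (u v : ℕ) :
    cocS a (u + v) = cocS a u + ∑ i ∈ Finset.range v, a ((u : ℕ) + (i : ℕ) : ℕ) := by
  induction v with
  | zero => simp [cocS]
  | succ v ih => rw [← add_assoc, cocS, Finset.sum_range_succ, ← cocS, ih,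
      Finset.sum_range_succ, add_assoc]

lemma cocS_add_m (a : ZMod m → Z) (u : ℕ) : cocS a (u + m) = cocS a u + cocS a m := by
  rw [cocS_add]
  congr 1
  have h1 : ∀ i : ℕ, ((u + i : ℕ) : ZMod m) = (u : ZMod m) + (i : ZMod m) := by push_cast; simp
  calc ∑ i ∈ Finset.range m, a ((u + i : ℕ) : ZMod m)
      = ∑ i ∈ Finset.range m, a ((u : ZMod m) + (i : ZMod m)) := by
        exact Finset.sum_congr rfl fun i _ => by rw [h1]
    _ = ∑ x : ZMod m, a ((u : ZMod m) + x) := sum_range_zmod (fun x => a ((u : ZMod m) + x))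
    _ = ∑ x : ZMod m, a x := Fintype.sum_equiv (Equiv.addLeft (u : ZMod m)) _ _ (fun x => rfl)
    _ = cocS a m := (sum_range_zmod a).symm

/-- `cocS` difference depends on starting point only mod `m`. -/
lemma cocS_sub_eq (a : ZMod m → Z) (u k t : ℕ) :
    cocS a (u + m * k + t) - cocS a (u + m * k) = cocS a (u + t) - cocS a u := by
  induction k with
  | zero => simp
  | succ k ih =>
      have e1 : u + m * (k + 1) + t = (u + m * k + t) + m := by ring
      have e2 : u + m * (k + 1) = (u + m * k) + m := by ring
      rw [e1, e2, cocS_add_m, cocS_add_m, add_sub_add_right_eq_sub]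
      exact ih

end Cyclic

section Cyclic2

variable {Z : Type*} [AddCommGroup Z] {m : ℕ} [NeZero m]

/-- The symmetric cocycle on `ZMod m` built from parameters `a`. -/
def cycCocycle (a : ZMod m → Z) : ZMod m → ZMod m → Z :=
  fun x y => cocS a (x.val + y.val) - cocS a x.val - cocS a y.val

lemma cocS_key (a : ZMod m → Z) (x y : ZMod m) (t : ℕ) :
    cocS a (x.val + y.val + t) - cocS a (x.val + y.val) =
      cocS a ((x + y).val + t) - cocS a ((x + y).val) := by
  have h : x.val + y.val = (x + y).val + m * ((x.val + y.val) / m) := by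
    rw [ZMod.val_add]; exact (Nat.mod_add_div _ _).symm
  rw [h]
  exact cocS_sub_eq a _ _ t

lemma cycCocycle_isSymCocycle (a : ZMod m → Z) : IsSymCocycle (cycCocycle a) := by
  refine ⟨fun y => ?_, fun x y => ?_, fun x y z => ?_⟩
  · simp [cycCocycle, ZMod.val_zero, cocS]
  · simp only [cycCocycle, Nat.add_comm x.val y.val]
    abel
  · simp only [cycCocycle]
    have k1' := eq_add_of_sub_eq (cocS_key a x y z.val).symm
    have k2' := eq_add_of_sub_eq (cocS_key a y z x.val).symm
    rw [Nat.add_comm x.val (y + z).val]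
    rw [k1', k2']
    rw [show x.val + y.val + z.val = y.val + z.val + x.val by ring]
    abel

lemma cycCocycle_one (hm : 1 < m) (a : ZMod m → Z) (ha : a 0 = 0) (k : ZMod m) :
    cycCocycle a 1 k = a k := by
  have h1 : (1 : ZMod m).val = 1 := by
    haveI : Fact (1 < m) := ⟨hm⟩
    exact ZMod.val_one m
  have hS1 : cocS a 1 = 0 := by simp [cocS, ha]
  have hS : cocS a (1 + k.val) = cocS a k.val + a k := by
    rw [Nat.add_comm, cocS, Finset.sum_range_succ, ← cocS, ZMod.natCast_zmod_val]
  rw [cycCocycle, h1, hS, hS1]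
  abel

/-- Symmetric cocycles on a cyclic group agreeing on `1` agree. -/
lemma symCocycle_cyc_ext {f g : ZMod m → ZMod m → Z} (hf : IsSymCocycle f)
    (hg : IsSymCocycle g) (h : ∀ k, f 1 k = g 1 k) : f = g := by
  have key : ∀ j : ℕ, ∀ k, f (j : ZMod m) k = g (j : ZMod m) k := by
    intro j
    induction j with
    | zero => intro k; simp only [Nat.cast_zero, hf.1, hg.1]
    | succ j ih =>
        intro k
        have Hf := hf.2.2 (j : ZMod m) 1 k
        have Hg := hg.2.2 (j : ZMod m) 1 k
        rw [add_comm (f _ 1)] at Hf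
        rw [add_comm (g _ 1)] at Hg
        have Ef := eq_sub_of_add_eq Hf
        have Eg := eq_sub_of_add_eq Hg
        push_cast
        rw [Ef, Eg, h, ih, ih]
  funext x y
  have := key x.val y
  rwa [ZMod.natCast_zmod_val] at this

/-- The parameterization of symmetric cocycles on `ZMod m`. -/
noncomputable def cycEquiv (hm : 1 < m) :
    SymCocycle (ZMod m) Z ≃ {a : ZMod m → Z // a 0 = 0} where
  toFun f := ⟨fun k => f.1 1 k, f.2.zero_right 1⟩
  invFun a := ⟨cycCocycle a.1, cycCocycle_isSymCocycle a.1⟩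
  left_inv f := Subtype.ext (symCocycle_cyc_ext (cycCocycle_isSymCocycle _) f.2
    (fun k => cycCocycle_one hm _ (f.2.zero_right 1) k))
  right_inv a := Subtype.ext (funext fun k => cycCocycle_one hm a.1 a.2 k)

/-- Functions vanishing at a point. -/
def vanishEquiv {α β : Type*} [DecidableEq α] [Zero β] (a₀ : α) :
    {f : α → β // f a₀ = 0} ≃ ({x : α // x ≠ a₀} → β) where
  toFun f x := f.1 x.1
  invFun g := ⟨fun x => if h : x = a₀ then 0 else g ⟨x, h⟩, by simp⟩
  left_inv f := Subtype.ext (funext fun x => by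
    by_cases h : x = a₀
    · subst h; simp [f.2]
    · simp [h])
  right_inv g := funext fun x => by
    have := x.2
    simp [this]

lemma card_vanish {α β : Type*} [Finite α] [Zero β] (a₀ : α) :
    Nat.card {f : α → β // f a₀ = 0} = Nat.card β ^ (Nat.card α - 1) := by
  classical
  rw [Nat.card_congr (vanishEquiv a₀), Nat.card_fun]
  congr 1
  haveI : Fintype α := Fintype.ofFinite α
  simp only [Nat.card_eq_fintype_card]
  rw [Fintype.card_subtype_compl, Fintype.card_subtype_eq]

lemma card_symCocycle_zmod (hm : 1 < m) [Finite Z] :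
    Nat.card (SymCocycle (ZMod m) Z) = Nat.card Z ^ (m - 1) := by
  rw [Nat.card_congr (cycEquiv hm), card_vanish (0 : ZMod m), Nat.card_zmod]

end Cyclic2

section Product

variable {A B Z : Type*} [AddCommGroup A] [AddCommGroup B] [AddCommGroup Z]

def prodCocycle (f₁ : A → A → Z) (f₂ : B → B → Z) (β : A → B → Z) :
    (A × B) → (A × B) → Z :=
  fun x y => f₁ x.1 y.1 + f₂ x.2 y.2 + β (x.1 + y.1) (x.2 + y.2) - β x.1 x.2 - β y.1 y.2

lemma prodCocycle_isSymCocycle {f₁ : A → A → Z} {f₂ : B → B → Z} {β : A → B → Z}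
    (h₁ : IsSymCocycle f₁) (h₂ : IsSymCocycle f₂)
    (hβ1 : ∀ b, β 0 b = 0) (hβ2 : ∀ a, β a 0 = 0) :
    IsSymCocycle (prodCocycle f₁ f₂ β) := by
  refine ⟨fun y => ?_, fun x y => ?_, fun x y z => ?_⟩
  · simp [prodCocycle, h₁.1, h₂.1, hβ1, hβ2]
  · simp only [prodCocycle, h₁.2.1 x.1 y.1, h₂.2.1 x.2 y.2,
      add_comm x.1 y.1, add_comm x.2 y.2]
    abel
  · have e1 := h₁.2.2 x.1 y.1 z.1
    have e2 := h₂.2.2 x.2 y.2 z.2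
    rw [add_comm] at e1 e2
    have e1' := eq_sub_of_add_eq e1
    have e2' := eq_sub_of_add_eq e2
    simp only [prodCocycle, Prod.fst_add, Prod.snd_add, add_assoc]
    rw [e1', e2']
    abel

lemma symCocycle_prod_formula {f : (A × B) → (A × B) → Z} (hf : IsSymCocycle f)
    (a₁ a₂ : A) (b₁ b₂ : B) :
    f (a₁, b₁) (a₂, b₂) = f (a₁, 0) (a₂, 0) + f (0, b₁) (0, b₂)
      + f (a₁ + a₂, 0) (0, b₁ + b₂) - f (a₁, 0) (0, b₁) - f (a₂, 0) (0, b₂) := by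
  have pe : ∀ (a a' : A) (b b' : B), ((a, b) + (a', b') : A × B) = (a + a', b + b') :=
    fun _ _ _ _ => rfl
  have E1 := hf.t3 (a₁, b₁) (a₂, (0 : B)) ((0 : A), b₂)
  simp only [pe, add_zero, zero_add] at E1
  have E2 := hf.t3 ((0 : A), b₁) (a₁, (0 : B)) (a₂, (0 : B))
  simp only [pe, add_zero, zero_add] at E2
  have E3 := hf.t3 (a₁ + a₂, (0 : B)) ((0 : A), b₁) ((0 : A), b₂)
  simp only [pe, add_zero, zero_add] at E3
  have h2 : f (a₁, b₁) (a₂, 0) = f (a₁, 0) (a₂, 0) + f (a₁ + a₂, 0) (0, b₁)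
      - f (a₁, 0) (0, b₁) := by
    rw [hf.2.1 ((0 : A), b₁) (a₁, (0 : B))] at E2
    rw [add_comm] at E2
    exact eq_sub_of_add_eq E2
  have h3 : f (a₁ + a₂, b₁) (0, b₂) = f (0, b₁) (0, b₂) + f (a₁ + a₂, 0) (0, b₁ + b₂)
      - f (a₁ + a₂, 0) (0, b₁) := by
    rw [hf.2.1 ((0 : A), b₁ + b₂) (a₁ + a₂, (0 : B))] at E3
    rw [add_comm] at E3
    exact eq_sub_of_add_eq E3
  have h1 := eq_sub_of_add_eq' E1.symm
  rw [hf.2.1 (a₁, b₁) (a₂, b₂), h1, h2, h3]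
  abel

lemma IsSymCocycle.restrictA {f : (A × B) → (A × B) → Z} (hf : IsSymCocycle f) :
    IsSymCocycle (fun a a' : A => f (a, 0) (a', 0)) := by
  refine ⟨fun y => ?_, fun x y => hf.2.1 _ _, fun x y z => ?_⟩
  · exact hf.1 _
  · have := hf.2.2 (x, (0 : B)) (y, 0) (z, 0)
    simpa using this

lemma IsSymCocycle.restrictB {f : (A × B) → (A × B) → Z} (hf : IsSymCocycle f) :
    IsSymCocycle (fun b b' : B => f (0, b) (0, b')) := by
  refine ⟨fun y => ?_, fun x y => hf.2.1 _ _, fun x y z => ?_⟩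
  · exact hf.1 _
  · have := hf.2.2 ((0 : A), x) (0, y) (0, z)
    simpa using this

def prodSymEquiv :
    SymCocycle (A × B) Z ≃
      SymCocycle A Z × SymCocycle B Z ×
        {β : A → B → Z // (∀ b, β 0 b = 0) ∧ ∀ a, β a 0 = 0} where
  toFun f := ⟨⟨fun a a' => f.1 (a, 0) (a', 0), f.2.restrictA⟩,
    ⟨fun b b' => f.1 (0, b) (0, b'), f.2.restrictB⟩,
    ⟨fun a b => f.1 (a, 0) (0, b), fun b => f.2.1 _, fun a => f.2.zero_right _⟩⟩
  invFun t := ⟨prodCocycle t.1.1 t.2.1.1 t.2.2.1,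
    prodCocycle_isSymCocycle t.1.2 t.2.1.2 t.2.2.2.1 t.2.2.2.2⟩
  left_inv f := Subtype.ext (funext fun x => funext fun y =>
    (symCocycle_prod_formula f.2 x.1 y.1 x.2 y.2).symm)
  right_inv := fun ⟨⟨f₁, h₁⟩, ⟨f₂, h₂⟩, ⟨β, hβ⟩⟩ => by
    refine Prod.ext (Subtype.ext ?_) (Prod.ext (Subtype.ext ?_) (Subtype.ext ?_))
    · funext a a'
      simp [prodCocycle, h₂.1, hβ.1, hβ.2]
    · funext b b'
      simp [prodCocycle, h₁.1, hβ.1]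
    · funext a b
      simp [prodCocycle, h₁.zero_right, h₂.1, hβ.1, hβ.2]

noncomputable def betaEquiv :
    {β : A → B → Z // (∀ b, β 0 b = 0) ∧ ∀ a, β a 0 = 0} ≃
      ({a : A // a ≠ 0} → {b : B // b ≠ 0} → Z) where
  toFun β a b := β.1 a.1 b.1
  invFun γ := ⟨fun a b => if ha : a = 0 then 0 else if hb : b = 0 then 0 else γ ⟨a, ha⟩ ⟨b, hb⟩,
    by
      constructor
      · intro b; simp
      · intro a; by_cases ha : a = 0 <;> simp [ha]⟩
  left_inv β := Subtype.ext (funext fun a => funext fun b => by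
    by_cases ha : a = 0
    · subst ha; simp [β.2.1]
    · by_cases hb : b = 0
      · subst hb; simp [ha, β.2.2]
      · simp [ha, hb])
  right_inv γ := funext fun a => funext fun b => by simp [a.2, b.2]

lemma card_subtype_ne {α : Type*} [Finite α] (a₀ : α) :
    Nat.card {x : α // x ≠ a₀} = Nat.card α - 1 := by
  classical
  haveI : Fintype α := Fintype.ofFinite α
  simp only [Nat.card_eq_fintype_card]
  rw [Fintype.card_subtype_compl, Fintype.card_subtype_eq]

lemma card_symCocycle_prod [Finite A] [Finite B] [Finite Z] :
    Nat.card (SymCocycle (A × B) Z) =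
      Nat.card (SymCocycle A Z) * Nat.card (SymCocycle B Z) *
        Nat.card Z ^ ((Nat.card A - 1) * (Nat.card B - 1)) := by
  rw [Nat.card_congr (prodSymEquiv (A := A) (B := B) (Z := Z)), Nat.card_prod, Nat.card_prod]
  rw [Nat.card_congr betaEquiv, Nat.card_fun, Nat.card_fun]
  rw [card_subtype_ne (0 : A), card_subtype_ne (0 : B), ← pow_mul,
    Nat.mul_comm (Nat.card B - 1), mul_assoc]

end Product

section Glue

variable {A A' Z : Type*} [AddCommGroup A] [AddCommGroup A'] [AddCommGroup Z]

def symCocycleCongr (e : A ≃+ A') : SymCocycle A Z ≃ SymCocycle A' Z where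
  toFun f := ⟨fun x y => f.1 (e.symm x) (e.symm y), by
    refine ⟨fun y => ?_, fun x y => f.2.2.1 _ _, fun x y z => ?_⟩
    · show f.1 (e.symm 0) (e.symm y) = 0
      rw [map_zero]; exact f.2.1 _
    · have := f.2.2.2 (e.symm x) (e.symm y) (e.symm z)
      simpa [map_add] using this⟩
  invFun f := ⟨fun x y => f.1 (e x) (e y), by
    refine ⟨fun y => ?_, fun x y => f.2.2.1 _ _, fun x y z => ?_⟩
    · show f.1 (e 0) (e y) = 0
      rw [map_zero]; exact f.2.1 _
    · have := f.2.2.2 (e x) (e y) (e z)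
      simpa [map_add] using this⟩
  left_inv f := Subtype.ext (funext fun x => funext fun y => by simp)
  right_inv f := Subtype.ext (funext fun x => funext fun y => by simp)

lemma card_symCocycle_of_subsingleton [Subsingleton A] :
    Nat.card (SymCocycle A Z) = 1 := by
  rw [Nat.card_eq_one_iff_unique]
  constructor
  · constructor
    intro f g
    apply Subtype.ext
    funext x y
    rw [Subsingleton.elim x 0, f.2.1, g.2.1]
  · exact ⟨⟨fun _ _ => 0, fun _ => rfl, fun _ _ => rfl, fun _ _ _ => rfl⟩⟩

/-- Pi-split additive equivalence. -/
def piSplitAddEquiv {ι : Type*} [DecidableEq ι] (M : ι → Type*) [∀ i, AddCommGroup (M i)]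
    (i₀ : ι) : (∀ i, M i) ≃+ M i₀ × ∀ j : {j : ι // j ≠ i₀}, M j.1 :=
  AddEquiv.mk' ((Equiv.piSplitAt i₀ M).trans (Equiv.refl _)) (fun f g => rfl)

lemma card_symCocycle_zmod_pi (Z : Type*) [AddCommGroup Z] [Finite Z] :
    ∀ (k : ℕ) (ι : Type) [Fintype ι], Fintype.card ι = k →
      ∀ (n : ι → ℕ), (∀ i, 1 < n i) →
        Nat.card (SymCocycle (∀ i, ZMod (n i)) Z) =
          Nat.card Z ^ (Nat.card (∀ i, ZMod (n i)) - 1) := by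
  intro k
  induction k with
  | zero =>
      intro ι hι hc n hn
      haveI : IsEmpty ι := Fintype.card_eq_zero_iff.mp hc
      have h1 : Nat.card (∀ i, ZMod (n i)) = 1 :=
        Nat.card_eq_one_iff_unique.mpr ⟨inferInstance, inferInstance⟩
      rw [card_symCocycle_of_subsingleton, h1]
      simp
  | succ k ih =>
      intro ι hι hc n hn
      classical
      have hne : Nonempty ι := Fintype.card_pos_iff.mp (by omega)
      obtain ⟨i₀⟩ := hne
      haveI : NeZero (n i₀) := ⟨by have := hn i₀; omega⟩
      haveI : ∀ j : {j : ι // j ≠ i₀}, NeZero (n j.1) := fun j => ⟨by have := hn j.1; omega⟩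
      have hcard : Fintype.card {j : ι // j ≠ i₀} = k := by
        rw [Fintype.card_subtype_compl, Fintype.card_subtype_eq, hc]
        omega
      have e := piSplitAddEquiv (fun i => ZMod (n i)) i₀
      rw [Nat.card_congr (symCocycleCongr (Z := Z) e), card_symCocycle_prod,
        card_symCocycle_zmod (hn i₀),
        ih _ hcard (fun j => n j.1) (fun j => hn j.1)]
      rw [Nat.card_congr e.toEquiv, Nat.card_prod, Nat.card_zmod]
      set r := Nat.card (∀ j : {j : ι // j ≠ i₀}, ZMod (n j.1)) with hr
      have hr1 : 1 ≤ r := Nat.card_pos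
      have hm1 : 1 ≤ n i₀ := le_of_lt (hn i₀)
      rw [← pow_add, ← pow_add]
      congr 1
      have key : ∀ m' r' : ℕ, m' + 1 - 1 + (r' + 1 - 1) + (m' + 1 - 1) * (r' + 1 - 1)
          = (m' + 1) * (r' + 1) - 1 := by
        intro m' r'
        simp only [Nat.add_sub_cancel]
        have : (m' + 1) * (r' + 1) = (m' + r' + m' * r') + 1 := by ring
        rw [this, Nat.add_sub_cancel]
      have := key (n i₀ - 1) (r - 1)
      rw [Nat.sub_add_cancel hm1, Nat.sub_add_cancel hr1] at this
      exact this

/-- The number of symmetric normalized 2-cocycles on a finite abelian group `A`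
with values in a finite abelian group `Z` is `|Z| ^ (|A| - 1)`. -/
lemma card_symCocycle (A Z : Type*) [AddCommGroup A] [Finite A] [AddCommGroup Z] [Finite Z] :
    Nat.card (SymCocycle A Z) = Nat.card Z ^ (Nat.card A - 1) := by
  obtain ⟨ι, hι, n, hn, ⟨e⟩⟩ := AddCommGroup.equiv_directSum_zmod_of_finite' A
  haveI := hι
  let e2 : A ≃+ ∀ i, ZMod (n i) := e.trans (DirectSum.addEquivProd (fun i => ZMod (n i)))
  rw [Nat.card_congr (symCocycleCongr (Z := Z) e2), Nat.card_congr e2.toEquiv]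
  exact card_symCocycle_zmod_pi Z (Fintype.card ι) ι rfl n hn

end Glue

section ExtSection

variable {A Z : Type*} [AddCommGroup A] [AddCommGroup Z]

/-- The carrier of the extension group built from a symmetric cocycle. -/
def ExtCarrier (f : SymCocycle A Z) : Type _ := Z × A

namespace ExtCarrier

variable (f : SymCocycle A Z)

instance : Add (ExtCarrier f) := ⟨fun x y => (x.1 + y.1 + f.1 x.2 y.2, x.2 + y.2)⟩
instance : Zero (ExtCarrier f) := ⟨((0 : Z), (0 : A))⟩
instance : Neg (ExtCarrier f) := ⟨fun x => (-x.1 - f.1 x.2 (-x.2), -x.2)⟩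

instance : AddCommGroup (ExtCarrier f) where
  nsmul := nsmulRec
  zsmul := zsmulRec
  add_assoc x y z := by
    have hc := f.2.2.2 x.2 y.2 z.2
    show ((x.1 + y.1 + f.1 x.2 y.2) + z.1 + f.1 (x.2 + y.2) z.2, (x.2 + y.2) + z.2)
      = (x.1 + (y.1 + z.1 + f.1 y.2 z.2) + f.1 x.2 (y.2 + z.2), x.2 + (y.2 + z.2))
    refine Prod.ext ?_ (add_assoc _ _ _)
    show x.1 + y.1 + f.1 x.2 y.2 + z.1 + f.1 (x.2 + y.2) z.2
      = x.1 + (y.1 + z.1 + f.1 y.2 z.2) + f.1 x.2 (y.2 + z.2)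
    calc x.1 + y.1 + f.1 x.2 y.2 + z.1 + f.1 (x.2 + y.2) z.2
        = x.1 + y.1 + z.1 + (f.1 x.2 y.2 + f.1 (x.2 + y.2) z.2) := by abel
      _ = x.1 + y.1 + z.1 + (f.1 y.2 z.2 + f.1 x.2 (y.2 + z.2)) := by rw [hc]
      _ = x.1 + (y.1 + z.1 + f.1 y.2 z.2) + f.1 x.2 (y.2 + z.2) := by abel
  zero_add x := by
    show (0 + x.1 + f.1 0 x.2, 0 + x.2) = x
    rw [f.2.1, zero_add, add_zero, zero_add]
    exact rfl
  add_zero x := by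
    show (x.1 + 0 + f.1 x.2 0, x.2 + 0) = x
    rw [f.2.zero_right, add_zero, add_zero, add_zero]
    exact rfl
  neg_add_cancel x := by
    show ((-x.1 - f.1 x.2 (-x.2)) + x.1 + f.1 (-x.2) x.2, -x.2 + x.2) = (0, 0)
    refine Prod.ext ?_ (neg_add_cancel _)
    show -x.1 - f.1 x.2 (-x.2) + x.1 + f.1 (-x.2) x.2 = 0
    rw [f.2.2.1 (-x.2) x.2]
    abel
  add_comm x y := by
    show (x.1 + y.1 + f.1 x.2 y.2, x.2 + y.2) = (y.1 + x.1 + f.1 y.2 x.2, y.2 + x.2)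
    rw [f.2.2.1 x.2 y.2, add_comm x.1 y.1, add_comm x.2 y.2]

lemma add_def (x y : ExtCarrier f) :
    x + y = (x.1 + y.1 + f.1 x.2 y.2, x.2 + y.2) := rfl

lemma zero_def : (0 : ExtCarrier f) = ((0 : Z), (0 : A)) := rfl

/-- Inclusion of `Z`. -/
def inl : Z →+ ExtCarrier f where
  toFun z := (z, 0)
  map_zero' := rfl
  map_add' z z' := by
    show ((z + z' : Z), (0 : A)) = (z + z' + f.1 0 0, 0 + 0)
    rw [f.2.1, add_zero, add_zero]

/-- Projection onto `A`. -/
def proj : ExtCarrier f →+ A where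
  toFun x := x.2
  map_zero' := rfl
  map_add' x y := rfl

/-- Set-theoretic section. -/
def sec (a : A) : ExtCarrier f := ((0 : Z), a)

lemma inl_injective : Function.Injective (inl f) := fun z z' h => congrArg Prod.fst h

lemma proj_surjective : Function.Surjective (proj f) := fun a => ⟨(0, a), rfl⟩

lemma range_inl_eq_ker_proj : (inl f).range = (proj f).ker := by
  ext x
  constructor
  · rintro ⟨z, rfl⟩; rfl
  · intro hx
    have : x.2 = 0 := hx
    exact ⟨x.1, by rw [inl]; exact Prod.ext rfl this.symm⟩

lemma proj_sec (a : A) : proj f (sec f a) = a := rfl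

lemma sec_zero : sec f 0 = (0 : ExtCarrier f) := rfl

lemma inl_add_sec (z : Z) (a : A) : inl f z + sec f a = (z, a) := by
  rw [add_def]
  show (z + 0 + f.1 0 a, 0 + a) = (z, a)
  rw [f.2.1, add_zero, add_zero, zero_add]

end ExtCarrier
section Datum

variable (Z A H : Type*) [AddCommGroup Z] [AddCommGroup A] [AddCommGroup H]

/-- An extension datum: an exact sequence `0 → Z → H → A → 0`. -/
def ExtDatum :=
  {ip : (Z →+ H) × (H →+ A) //
    Function.Injective ip.1 ∧ Function.Surjective ip.2 ∧ ip.1.range = ip.2.ker}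

/-- An extension datum with a normalized set-theoretic section. -/
def ExtDatumSec :=
  {t : ((Z →+ H) × (H →+ A)) × (A → H) //
    Function.Injective t.1.1 ∧ Function.Surjective t.1.2 ∧ t.1.1.range = t.1.2.ker ∧
      (∀ a, t.1.2 (t.2 a) = a) ∧ t.2 0 = 0}

variable {Z A H}

/-- From a cocycle and an isomorphism, an extension datum with section. -/
def toDatum (f : SymCocycle A Z) (φ : ExtCarrier f ≃+ H) : ExtDatumSec Z A H := by
  refine ⟨((φ.toAddMonoidHom.comp (ExtCarrier.inl f),
      (ExtCarrier.proj f).comp φ.symm.toAddMonoidHom), fun a => φ (ExtCarrier.sec f a)),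
    ?_, ?_, ?_, ?_, ?_⟩
  · exact φ.injective.comp (ExtCarrier.inl_injective f)
  · exact (ExtCarrier.proj_surjective f).comp φ.symm.surjective
  · ext h
    simp only [AddMonoidHom.mem_range, AddMonoidHom.coe_comp, Function.comp_apply,
      AddMonoidHom.mem_ker, AddEquiv.coe_toAddMonoidHom]
    constructor
    · rintro ⟨z, rfl⟩
      simp only [AddEquiv.symm_apply_apply]
      rfl
    · intro hx
      refine ⟨(φ.symm h).1, ?_⟩
      have h2 : (φ.symm h).2 = 0 := hx
      have : ExtCarrier.inl f (φ.symm h).1 = φ.symm h := by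
        show ((φ.symm h).1, (0 : A)) = φ.symm h
        rw [← h2]
        exact rfl
      rw [this, AddEquiv.apply_symm_apply]
  · intro a
    simp only [AddMonoidHom.coe_comp, Function.comp_apply, AddEquiv.coe_toAddMonoidHom,
      AddEquiv.symm_apply_apply]
    rfl
  · show φ (ExtCarrier.sec f 0) = 0
    rw [ExtCarrier.sec_zero, map_zero]

lemma sec_add_sec (f : SymCocycle A Z) (a b : A) :
    ExtCarrier.sec f a + ExtCarrier.sec f b
      = ExtCarrier.inl f (f.1 a b) + ExtCarrier.sec f (a + b) := by
  rw [ExtCarrier.inl_add_sec]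
  show ((0 : Z) + 0 + f.1 a b, a + b) = (f.1 a b, a + b)
  rw [zero_add, zero_add]

lemma toDatum_injective :
    Function.Injective (fun x : Σ f : SymCocycle A Z, (ExtCarrier f ≃+ H) =>
      toDatum x.1 x.2) := by
  rintro ⟨f, φ⟩ ⟨g, ψ⟩ h
  have hi : φ.toAddMonoidHom.comp (ExtCarrier.inl f)
      = ψ.toAddMonoidHom.comp (ExtCarrier.inl g) :=
    congrArg (fun d : ExtDatumSec Z A H => d.1.1.1) h
  have hz : ∀ z : Z, φ (ExtCarrier.inl f z) = ψ (ExtCarrier.inl g z) := fun z =>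
    DFunLike.congr_fun hi z
  have hsec : ∀ a : A, φ (ExtCarrier.sec f a) = ψ (ExtCarrier.sec g a) := fun a =>
    congrArg (fun d : ExtDatumSec Z A H => d.1.2 a) h
  have hfg : f = g := by
    apply Subtype.ext
    funext a b
    have e1 : φ (ExtCarrier.inl f (f.1 a b)) + φ (ExtCarrier.sec f (a + b))
        = φ (ExtCarrier.sec f a) + φ (ExtCarrier.sec f b) := by
      rw [← map_add, ← map_add, ← sec_add_sec]
    have e2 : ψ (ExtCarrier.inl g (g.1 a b)) + ψ (ExtCarrier.sec g (a + b))
        = ψ (ExtCarrier.sec g a) + ψ (ExtCarrier.sec g b) := by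
      rw [← map_add, ← map_add, ← sec_add_sec]
    rw [hsec (a+b), hsec a, hsec b, ← e2] at e1
    have e3 : φ (ExtCarrier.inl f (f.1 a b)) = ψ (ExtCarrier.inl g (g.1 a b)) :=
      add_right_cancel e1
    rw [← hz (g.1 a b)] at e3
    exact ExtCarrier.inl_injective f (φ.injective e3)
  subst hfg
  have hφψ : φ = ψ := by
    apply AddEquiv.ext
    intro x
    have hx : x = ExtCarrier.inl f x.1 + ExtCarrier.sec f x.2 :=
      (ExtCarrier.inl_add_sec f x.1 x.2).symm
    rw [hx, map_add, map_add, hz, hsec]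
  exact congrArg (Sigma.mk f) hφψ

lemma toDatum_surjective :
    Function.Surjective (fun x : Σ f : SymCocycle A Z, (ExtCarrier f ≃+ H) =>
      toDatum x.1 x.2) := by
  rintro ⟨⟨⟨i, p⟩, s⟩, hi, hp, hrange, hsec, hs0⟩
  dsimp only at hi hp hrange hsec hs0
  have hpi : ∀ z : Z, p (i z) = 0 := by
    intro z
    have : i z ∈ p.ker := hrange ▸ ⟨z, rfl⟩
    exact this
  have hmem : ∀ a b : A, s a + s b - s (a + b) ∈ i.range := by
    intro a b
    rw [hrange]
    show p _ = 0
    rw [map_sub, map_add, hsec, hsec, hsec, sub_self]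
  set e := AddMonoidHom.ofInjective hi with he
  have key : ∀ a b : A, i (e.symm ⟨s a + s b - s (a + b), hmem a b⟩) = s a + s b - s (a + b) := by
    intro a b
    have h1 : (e (e.symm ⟨s a + s b - s (a + b), hmem a b⟩) : H)
        = ((⟨s a + s b - s (a + b), hmem a b⟩ : i.range) : H) := by
      rw [AddEquiv.apply_symm_apply]
    rwa [AddMonoidHom.ofInjective_apply] at h1
  set f₀ : A → A → Z := fun a b => e.symm ⟨s a + s b - s (a + b), hmem a b⟩ with hf₀
  have hcoc : IsSymCocycle f₀ := by
    refine ⟨fun b => hi ?_, fun a b => hi ?_, fun x y z => hi ?_⟩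
    · rw [key, map_zero, hs0, zero_add, zero_add, sub_self]
    · rw [key, key, add_comm a b, add_comm (s a)]
    · rw [map_add, map_add, key, key, key, key, add_assoc x y z]
      abel
  set F : SymCocycle A Z := ⟨f₀, hcoc⟩ with hF
  set φ₀ : ExtCarrier F → H := fun x => i x.1 + s x.2 with hφ₀
  have hbij : Function.Bijective φ₀ := by
    constructor
    · intro x y hxy
      have h2 : x.2 = y.2 := by
        have := congrArg p hxy
        simpa [hφ₀, map_add, hpi, hsec] using this
      have h1 : i x.1 = i y.1 := by
        rw [hφ₀] at hxy
        simp only at hxy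
        rw [h2] at hxy
        exact add_right_cancel hxy
      exact Prod.ext (hi h1) h2
    · intro h
      have : h - s (p h) ∈ p.ker := by
        show p _ = 0
        rw [map_sub, hsec, sub_self]
      rw [← hrange] at this
      obtain ⟨z, hz⟩ := this
      exact ⟨(z, p h), by show i z + s (p h) = h; rw [hz, sub_add_cancel]⟩
  have hmap : ∀ x y : ExtCarrier F, φ₀ (x + y) = φ₀ x + φ₀ y := by
    intro x y
    show i (x.1 + y.1 + f₀ x.2 y.2) + s (x.2 + y.2) = (i x.1 + s x.2) + (i y.1 + s y.2)
    rw [map_add, map_add, key]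
    abel
  set φ : ExtCarrier F ≃+ H := AddEquiv.mk' (Equiv.ofBijective φ₀ hbij) hmap with hφ
  have hφ_apply : ∀ x : ExtCarrier F, φ x = i x.1 + s x.2 := fun x => rfl
  refine ⟨⟨F, φ⟩, ?_⟩
  apply Subtype.ext
  refine Prod.ext (Prod.ext ?_ ?_) ?_
  · apply AddMonoidHom.ext
    intro z
    show φ (ExtCarrier.inl F z) = i z
    rw [hφ_apply]
    show i z + s 0 = i z
    rw [hs0, add_zero]
  · apply AddMonoidHom.ext
    intro h
    show ExtCarrier.proj F (φ.symm h) = p h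
    have : h = φ (φ.symm h) := (φ.apply_symm_apply h).symm
    conv_rhs => rw [this, hφ_apply]
    rw [map_add, hpi, hsec, zero_add]
    rfl
  · funext a
    show φ (ExtCarrier.sec F a) = s a
    rw [hφ_apply]
    show i 0 + s a = s a
    rw [map_zero, zero_add]

/-- The central bijection. -/
noncomputable def datumEquiv :
    (Σ f : SymCocycle A Z, (ExtCarrier f ≃+ H)) ≃ ExtDatumSec Z A H :=
  Equiv.ofBijective _ ⟨toDatum_injective, toDatum_surjective⟩

end Datum

section Counting

instance addMonoidHom_finite {M N : Type*} [AddMonoid M] [AddMonoid N] [Finite M] [Finite N] :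
    Finite (M →+ N) :=
  Finite.of_injective (fun f => (f : M → N)) DFunLike.coe_injective

instance addEquiv_finite {M N : Type*} [AddZeroClass M] [AddZeroClass N] [Finite M] [Finite N] :
    Finite (M ≃+ N) :=
  Finite.of_injective (fun f => (f : M → N)) DFunLike.coe_injective

lemma card_addEquiv_left {M N : Type*} [AddZeroClass M] [AddZeroClass N]
    (h : Nonempty (M ≃+ N)) : Nat.card (M ≃+ N) = Nat.card (M ≃+ M) := by
  obtain ⟨e⟩ := h
  exact Nat.card_congr
    ⟨fun σ => σ.trans e.symm, fun τ => τ.trans e,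
      fun σ => by ext x; simp, fun τ => by ext x; simp⟩

lemma card_addEquiv_right {M N : Type*} [AddZeroClass M] [AddZeroClass N]
    (h : Nonempty (M ≃+ N)) : Nat.card (M ≃+ N) = Nat.card (N ≃+ N) := by
  obtain ⟨e⟩ := h
  exact Nat.card_congr
    ⟨fun σ => AddEquiv.trans e.symm σ, fun τ => AddEquiv.trans e τ,
      fun σ => by ext x; simp, fun τ => by ext x; simp⟩

variable {Z A H : Type*} [AddCommGroup Z] [AddCommGroup A] [AddCommGroup H]

/-- Map from subgroup-with-isos data to extension data. -/
def subToDatum (x : Σ H₁ : AddSubgroup H, (Z ≃+ H₁) × ((H ⧸ H₁) ≃+ A)) : ExtDatum Z A H := by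
  obtain ⟨H₁, e₁, q₁⟩ := x
  refine ⟨(H₁.subtype.comp e₁.toAddMonoidHom,
    q₁.toAddMonoidHom.comp (QuotientAddGroup.mk' H₁)), ?_, ?_, ?_⟩
  · exact H₁.subtype_injective.comp e₁.injective
  · exact q₁.surjective.comp (QuotientAddGroup.mk'_surjective H₁)
  · have h1 : (H₁.subtype.comp e₁.toAddMonoidHom).range = H₁ := by
      ext x
      simp only [AddMonoidHom.mem_range, AddMonoidHom.coe_comp, Function.comp_apply,
        AddEquiv.coe_toAddMonoidHom, AddSubgroup.coe_subtype]
      constructor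
      · rintro ⟨z, rfl⟩; exact (e₁ z).2
      · intro hx; exact ⟨e₁.symm ⟨x, hx⟩, by simp⟩
    have h2 : (q₁.toAddMonoidHom.comp (QuotientAddGroup.mk' H₁)).ker = H₁ := by
      ext x
      simp only [AddMonoidHom.mem_ker, AddMonoidHom.coe_comp, Function.comp_apply,
        AddEquiv.coe_toAddMonoidHom]
      rw [show (0 : A) = q₁ 0 by simp, q₁.injective.eq_iff]
      exact QuotientAddGroup.eq_zero_iff x
    rw [h1, h2]

lemma subToDatum_injective : Function.Injective (subToDatum (Z := Z) (A := A) (H := H)) := by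
  rintro ⟨H₁, e₁, q₁⟩ ⟨H₂, e₂, q₂⟩ h
  have hi := congrArg (fun d : ExtDatum Z A H => d.1.1) h
  have hp := congrArg (fun d : ExtDatum Z A H => d.1.2) h
  dsimp only [subToDatum] at hi hp
  have hH : H₁ = H₂ := by
    have r1 : (H₁.subtype.comp e₁.toAddMonoidHom).range = H₁ := by
      ext x
      simp only [AddMonoidHom.mem_range, AddMonoidHom.coe_comp, Function.comp_apply,
        AddEquiv.coe_toAddMonoidHom, AddSubgroup.coe_subtype]
      exact ⟨fun ⟨z, hz⟩ => hz ▸ (e₁ z).2, fun hx => ⟨e₁.symm ⟨x, hx⟩, by simp⟩⟩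
    have r2 : (H₂.subtype.comp e₂.toAddMonoidHom).range = H₂ := by
      ext x
      simp only [AddMonoidHom.mem_range, AddMonoidHom.coe_comp, Function.comp_apply,
        AddEquiv.coe_toAddMonoidHom, AddSubgroup.coe_subtype]
      exact ⟨fun ⟨z, hz⟩ => hz ▸ (e₂ z).2, fun hx => ⟨e₂.symm ⟨x, hx⟩, by simp⟩⟩
    rw [← r1, ← r2, hi]
  subst hH
  have he : e₁ = e₂ := by
    apply AddEquiv.ext
    intro z
    apply Subtype.ext
    have := DFunLike.congr_fun hi z
    simpa using this
  have hq : q₁ = q₂ := by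
    apply AddEquiv.ext
    intro x
    obtain ⟨h', rfl⟩ := QuotientAddGroup.mk'_surjective H₁ x
    have := DFunLike.congr_fun hp h'
    simpa using this
  rw [he, hq]

lemma subToDatum_surjective : Function.Surjective (subToDatum (Z := Z) (A := A) (H := H)) := by
  rintro ⟨⟨i, p⟩, hi, hp, hex⟩
  dsimp only at hi hp hex
  refine ⟨⟨i.range, AddMonoidHom.ofInjective hi,
    (QuotientAddGroup.quotientAddEquivOfEq hex).trans
      (QuotientAddGroup.quotientKerEquivOfSurjective p hp)⟩, ?_⟩
  apply Subtype.ext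
  refine Prod.ext ?_ ?_
  · apply AddMonoidHom.ext
    intro z
    show ((AddMonoidHom.ofInjective hi z : i.range) : H) = i z
    rw [AddMonoidHom.ofInjective_apply]
  · apply AddMonoidHom.ext
    intro h
    show ((QuotientAddGroup.quotientAddEquivOfEq hex).trans
      (QuotientAddGroup.quotientKerEquivOfSurjective p hp)) (QuotientAddGroup.mk h) = p h
    rw [AddEquiv.trans_apply, QuotientAddGroup.quotientAddEquivOfEq_mk]
    exact QuotientAddGroup.kerLift_mk p h

end Counting

section Counting2

lemma card_subtype_ne' {α : Type*} [Finite α] (a₀ : α) :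
    Nat.card {x : α // x ≠ a₀} = Nat.card α - 1 := by
  classical
  haveI : Fintype α := Fintype.ofFinite α
  simp only [Nat.card_eq_fintype_card]
  rw [Fintype.card_subtype_compl, Fintype.card_subtype_eq]

lemma card_sigma_const {ι : Type*} [Finite ι] (F : ι → Type*) [∀ i, Finite (F i)] (c : ℕ)
    (h : ∀ i, Nat.card (F i) = c) : Nat.card (Σ i, F i) = Nat.card ι * c := by
  classical
  haveI : Fintype ι := Fintype.ofFinite ι
  haveI : ∀ i, Fintype (F i) := fun i => Fintype.ofFinite _
  rw [Nat.card_eq_fintype_card, Fintype.card_sigma, Nat.card_eq_fintype_card]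
  have h' : ∀ i, Fintype.card (F i) = c := fun i => by
    rw [← Nat.card_eq_fintype_card, h i]
  simp_rw [h']
  rw [Finset.sum_const, smul_eq_mul, Finset.card_univ]

lemma card_sigma_nonempty {ι : Type*} [Finite ι] (F : ι → Type*) [∀ i, Finite (F i)] (c : ℕ)
    (h : ∀ i, Nonempty (F i) → Nat.card (F i) = c) :
    Nat.card (Σ i, F i) = Nat.card {i // Nonempty (F i)} * c := by
  classical
  haveI : Fintype ι := Fintype.ofFinite ι
  haveI : ∀ i, Fintype (F i) := fun i => Fintype.ofFinite _
  rw [Nat.card_eq_fintype_card, Fintype.card_sigma]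
  have h' : ∀ i, Fintype.card (F i) = if Nonempty (F i) then c else 0 := by
    intro i
    by_cases hi : Nonempty (F i)
    · rw [if_pos hi, ← Nat.card_eq_fintype_card, h i hi]
    · rw [if_neg hi, Fintype.card_eq_zero_iff.mpr (not_nonempty_iff.mp hi)]
  simp_rw [h']
  rw [← Finset.sum_filter, Finset.sum_const, smul_eq_mul,
    Nat.card_eq_fintype_card, Fintype.card_subtype]

variable {Z A H : Type*} [AddCommGroup Z] [AddCommGroup A] [AddCommGroup H]
variable [Finite Z] [Finite A] [Finite H]

instance (f : SymCocycle A Z) : Finite (ExtCarrier f) := inferInstanceAs (Finite (Z × A))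

instance : Finite (SymCocycle A Z) :=
  Finite.of_injective (fun f => (f.1 : A → A → Z)) (fun f g h => Subtype.ext h)

instance : Finite (AddSubgroup H) :=
  Finite.of_injective (fun s => (s : Set H)) (fun _ _ h => SetLike.coe_injective h)

instance : Finite (ExtDatum Z A H) := by
  unfold ExtDatum; infer_instance

instance : Finite (ExtDatumSec Z A H) := by
  unfold ExtDatumSec; infer_instance

/-- Step (a): the number of extension data in terms of `subCount`. -/
lemma card_extDatum :
    Nat.card (ExtDatum Z A H) =
      Nat.card {H₁ : AddSubgroup H // Nonempty (H₁ ≃+ Z) ∧ Nonempty ((H ⧸ H₁) ≃+ A)} *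
        (Nat.card (Z ≃+ Z) * Nat.card (A ≃+ A)) := by
  classical
  rw [← Nat.card_congr (Equiv.ofBijective _
    ⟨subToDatum_injective (Z := Z) (A := A) (H := H), subToDatum_surjective⟩)]
  rw [card_sigma_nonempty _ (Nat.card (Z ≃+ Z) * Nat.card (A ≃+ A)) ?_]
  · congr 1
    apply Nat.card_congr
    apply Equiv.subtypeEquivRight
    intro H₁
    rw [nonempty_prod]
    constructor
    · rintro ⟨⟨e⟩, he⟩; exact ⟨⟨e.symm⟩, he⟩
    · rintro ⟨⟨e⟩, he⟩; exact ⟨⟨e.symm⟩, he⟩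
  · rintro H₁ ⟨e₁, q₁⟩
    rw [Nat.card_prod, card_addEquiv_left ⟨e₁⟩, card_addEquiv_right ⟨q₁⟩]

/-- The equivalence splitting off the section data. -/
def datumSecEquiv : ExtDatumSec Z A H ≃
    Σ d : ExtDatum Z A H, {s : A → H // (∀ a, d.1.2 (s a) = a) ∧ s 0 = 0} where
  toFun t := ⟨⟨t.1.1, t.2.1, t.2.2.1, t.2.2.2.1⟩, ⟨t.1.2, t.2.2.2.2⟩⟩
  invFun x := ⟨(x.1.1, x.2.1), x.1.2.1, x.1.2.2.1, x.1.2.2.2, x.2.2⟩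
  left_inv t := rfl
  right_inv x := rfl

lemma card_point_fiber {p : H →+ A} (hp : Function.Surjective p) (hker : Nat.card p.ker = Nat.card Z)
    (v : A) : Nat.card {h : H // p h = v} = Nat.card Z := by
  obtain ⟨h₀, hh₀⟩ := hp v
  rw [← hker]
  apply Nat.card_congr
  refine ⟨fun h => ⟨h.1 - h₀, ?_⟩, fun k => ⟨k.1 + h₀, ?_⟩, fun h => ?_, fun k => ?_⟩
  · have : p (h.1 - h₀) = 0 := by rw [map_sub, h.2, hh₀, sub_self]
    exact this
  · have hk : p k.1 = 0 := k.2
    rw [map_add, hk, hh₀, zero_add]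
  · apply Subtype.ext; simp
  · apply Subtype.ext; simp

lemma card_secFiber (d : ExtDatum Z A H) :
    Nat.card {s : A → H // (∀ a, d.1.2 (s a) = a) ∧ s 0 = 0}
      = Nat.card Z ^ (Nat.card A - 1) := by
  classical
  obtain ⟨⟨i, p⟩, hi, hp, hex⟩ := d
  dsimp only at hi hp hex ⊢
  have hker : Nat.card p.ker = Nat.card Z := by
    rw [← hex]
    exact (Nat.card_congr (AddMonoidHom.ofInjective hi).toEquiv).symm
  have e : {s : A → H // (∀ a, p (s a) = a) ∧ s 0 = 0}
      ≃ ∀ a : {a : A // a ≠ 0}, {h : H // p h = a.1} := by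
    refine ⟨fun s a => ⟨s.1 a.1, s.2.1 a.1⟩,
      fun t => ⟨fun a => if h : a = 0 then 0 else (t ⟨a, h⟩).1, ?_, ?_⟩, fun s => ?_, fun t => ?_⟩
    · intro a
      by_cases h : a = 0
      · subst h; dsimp only; rw [dif_pos rfl, map_zero]
      · dsimp only; rw [dif_neg h]; exact (t ⟨a, h⟩).2
    · show (if h : (0 : A) = 0 then 0 else ((t ⟨0, h⟩).1 : H)) = 0
      exact dif_pos rfl
    · apply Subtype.ext
      funext a
      show (if h : a = 0 then 0 else ((⟨s.1 a, _⟩ : {h : H // p h = a}).1 : H)) = s.1 a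
      by_cases h : a = 0
      · subst h; rw [dif_pos rfl, s.2.2]
      · rw [dif_neg h]
    · funext a
      apply Subtype.ext
      show (if h : a.1 = 0 then 0 else ((t ⟨a.1, h⟩).1 : H)) = (t a).1
      rw [dif_neg a.2]
  rw [Nat.card_congr e]
  haveI : Fintype {a : A // a ≠ 0} := Fintype.ofFinite _
  rw [Nat.card_pi]
  have : ∀ a : {a : A // a ≠ 0}, Nat.card {h : H // p h = a.1} = Nat.card Z := fun a =>
    card_point_fiber hp hker a.1
  simp_rw [this]
  rw [Finset.prod_const, Finset.card_univ, ← Nat.card_eq_fintype_card, card_subtype_ne']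

/-- Step (b). -/
lemma card_extDatumSec :
    Nat.card (ExtDatumSec Z A H)
      = Nat.card (ExtDatum Z A H) * Nat.card Z ^ (Nat.card A - 1) := by
  rw [Nat.card_congr (datumSecEquiv (Z := Z) (A := A) (H := H))]
  exact card_sigma_const _ _ (fun d => card_secFiber d)

/-- Step (d). -/
lemma card_sigma_iso :
    Nat.card (Σ f : SymCocycle A Z, (ExtCarrier f ≃+ H))
      = Nat.card {f : SymCocycle A Z // Nonempty (ExtCarrier f ≃+ H)} * Nat.card (H ≃+ H) := by
  exact card_sigma_nonempty _ _ (fun f hf => card_addEquiv_right hf)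

/-- The master count for a fixed `H`. -/
lemma master_count :
    Nat.card {H₁ : AddSubgroup H // Nonempty (H₁ ≃+ Z) ∧ Nonempty ((H ⧸ H₁) ≃+ A)} *
        (Nat.card (Z ≃+ Z) * Nat.card (A ≃+ A)) * Nat.card Z ^ (Nat.card A - 1)
      = Nat.card {f : SymCocycle A Z // Nonempty (ExtCarrier f ≃+ H)} * Nat.card (H ≃+ H) := by
  rw [← card_extDatum, ← card_extDatumSec, Nat.card_congr (datumEquiv (Z := Z) (A := A) (H := H)).symm,
    card_sigma_iso]

end Counting2

end ExtSection

section Final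

variable {p : ℕ}

/-- The extension group bundled as a `FinAbPGroup`. -/
noncomputable def EBundle (Z G : FinAbPGroup p) (f : SymCocycle G.carrier Z.carrier) :
    FinAbPGroup p where
  carrier := ExtCarrier f
  card_isPPow := by
    obtain ⟨a, ha⟩ := Z.card_isPPow
    obtain ⟨b, hb⟩ := G.card_isPPow
    refine ⟨a + b, ?_⟩
    have : Nat.card (ExtCarrier f) = Nat.card Z.carrier * Nat.card G.carrier :=
      Nat.card_prod _ _
    rw [this, ha, hb, pow_add]

/-- The class of the extension group. -/
noncomputable def cls (Z G : FinAbPGroup p) (f : SymCocycle G.carrier Z.carrier) :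
    FinAbPGroupClass p := ⟦EBundle Z G f⟧

lemma cls_eq_iff (Z G : FinAbPGroup p) (f : SymCocycle G.carrier Z.carrier)
    (c : FinAbPGroupClass p) :
    cls Z G f = c ↔ Nonempty (ExtCarrier f ≃+ c.rep.carrier) := by
  conv_lhs => rw [cls, show c = ⟦c.rep⟧ from (Quotient.out_eq c).symm]
  exact Quotient.eq

/-- Fibre counts of a map from a finite type sum to the total cardinality. -/
lemma hasSum_fiber_card {α β : Type*} [Finite α] (q : α → β) :
    HasSum (fun b : β => (Nat.card {a : α // q a = b} : ℝ)) (Nat.card α) := by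
  classical
  haveI : Fintype α := Fintype.ofFinite α
  have hsupp : ∀ b ∉ Finset.image q Finset.univ, (Nat.card {a : α // q a = b} : ℝ) = 0 := by
    intro b hb
    have : IsEmpty {a : α // q a = b} := by
      constructor
      rintro ⟨a, rfl⟩
      exact hb (Finset.mem_image_of_mem q (Finset.mem_univ a))
    rw [Nat.card_of_isEmpty, Nat.cast_zero]
  have hsum := hasSum_sum_of_ne_finset_zero (L := SummationFilter.unconditional _) hsupp
  convert hsum using 1
  have : Fintype.card α
      = ∑ b ∈ Finset.image q Finset.univ, (Finset.univ.filter fun a => q a = b).card := by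
    rw [← Finset.card_univ]
    exact Finset.card_eq_sum_card_fiberwise
      (fun a _ => Finset.mem_image_of_mem q (Finset.mem_univ a))
  rw [Nat.card_eq_fintype_card, this]
  push_cast
  apply Finset.sum_congr rfl
  intro b _
  rw [Nat.card_eq_fintype_card, Fintype.card_subtype]

end Final

/-- Cohen–Lenstra: `Σ_H |{H₁ ≤ H : H₁ ≅ Z, H/H₁ ≅ G}|/|Aut(H)| = 1/(|Aut(Z)|·|Aut(G)|)`. -/
theorem cohenLenstra_subgroup_sum (p : ℕ) (hp : p.Prime) (Z G : FinAbPGroup p) :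
    HasSum (fun c : FinAbPGroupClass p =>
        (subCount c.rep Z G : ℝ) / (c.rep.autCard : ℝ))
      (1 / ((Z.autCard : ℝ) * (G.autCard : ℝ))) := by
  classical
  set W : ℕ := Nat.card Z.carrier ^ (Nat.card G.carrier - 1) with hWdef
  have hW : Nat.card (SymCocycle G.carrier Z.carrier) = W :=
    card_symCocycle G.carrier Z.carrier
  set g : FinAbPGroupClass p → ℕ :=
    fun c => Nat.card {f : SymCocycle G.carrier Z.carrier // cls Z G f = c} with hg
  -- positivity facts
  haveI : Nonempty (Z.carrier ≃+ Z.carrier) := ⟨AddEquiv.refl _⟩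
  haveI : Nonempty (G.carrier ≃+ G.carrier) := ⟨AddEquiv.refl _⟩
  have hCZ : 0 < Z.autCard := Nat.card_pos
  have hCA : 0 < G.autCard := Nat.card_pos
  have hWpos : 0 < W := by
    have : 0 < Nat.card Z.carrier := Nat.card_pos
    exact pow_pos this _
  -- the key counting identity, per class
  have hkey : ∀ c : FinAbPGroupClass p,
      subCount c.rep Z G * (Z.autCard * G.autCard) * W = g c * c.rep.autCard := by
    intro c
    have h2 : Nat.card {f : SymCocycle G.carrier Z.carrier //
        Nonempty (ExtCarrier f ≃+ c.rep.carrier)} = g c :=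
      Nat.card_congr (Equiv.subtypeEquivRight (fun f => (cls_eq_iff Z G f c).symm))
    have h1 := master_count (Z := Z.carrier) (A := G.carrier) (H := c.rep.carrier)
    rw [h2] at h1
    exact h1
  -- pass to real numbers
  set D : ℝ := (W : ℝ) * (Z.autCard : ℝ) * (G.autCard : ℝ) with hD
  have hDne : D ≠ 0 := by
    rw [hD]
    have h1 : (0:ℝ) < (W:ℝ) := by exact_mod_cast hWpos
    have h2 : (0:ℝ) < (Z.autCard:ℝ) := by exact_mod_cast hCZ
    have h3 : (0:ℝ) < (G.autCard:ℝ) := by exact_mod_cast hCA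
    positivity
  have hsum := (hasSum_fiber_card (cls Z G)).div_const D
  have hfun : (fun c : FinAbPGroupClass p => (g c : ℝ) / D)
      = fun c => (subCount c.rep Z G : ℝ) / (c.rep.autCard : ℝ) := by
    funext c
    haveI : Nonempty (c.rep.carrier ≃+ c.rep.carrier) := ⟨AddEquiv.refl _⟩
    have hautH : 0 < c.rep.autCard := Nat.card_pos
    have hn1 : ((c.rep.autCard : ℝ)) ≠ 0 := by
      have : (0:ℝ) < (c.rep.autCard:ℝ) := by exact_mod_cast hautH
      exact ne_of_gt this
    rw [eq_comm, div_eq_div_iff hn1 hDne]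
    have hc := congrArg (fun n : ℕ => (n : ℝ)) (hkey c)
    push_cast at hc
    rw [hD]
    linear_combination hc
  rw [hfun, hW] at hsum
  have hval : (W : ℝ) / D = 1 / ((Z.autCard : ℝ) * (G.autCard : ℝ)) := by
    rw [hD]
    have h1 : (W : ℝ) ≠ 0 := by
      have : (0:ℝ) < (W:ℝ) := by exact_mod_cast hWpos
      exact ne_of_gt this
    field_simp
  rwa [hval] at hsum
end
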